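/- arXiv:2309.14607 — 2 statements merged into one kernel-verified Lean document; each statement's English description precedes it below -/
import Mathlib

section
/- Let 0 < p ≤ 1, let X be a p-Banach space over 𝔽 = ℝ or ℂ, and let 𝒳 be a basis of X. Then 𝒳 is almost greedy if and only if there is C > 0 such that ‖f − P_A(f)‖ ≤ C·‖f − a·𝟙_{ε,B}‖ for all f ∈ X, all greedy sets A of f, all B ⊂ ℕ with |B| ≤ |A| and A ∩ B = ∅, all signs ε on B, and all a ∈ 𝔽. -/
open scoped BigOperators

noncomputable section

/-- A basis of a `p`-Banach space over `𝕜` (`𝕜 = ℝ` or `ℂ`), bundled with the `p`-norm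
`N`, the basis vectors `e`, and the biorthogonal functionals `coord`. -/
structure PBasis (𝕜 : Type*) [RCLike 𝕜] (X : Type*) [AddCommGroup X] [Module 𝕜 X]
    (p : ℝ) : Type _ where
  /-- the `p`-norm of the space -/
  N : X → ℝ
  N_nonneg : ∀ f : X, 0 ≤ N f
  N_eq_zero_iff : ∀ f : X, N f = 0 ↔ f = 0
  N_smul : ∀ (t : 𝕜) (f : X), N (t • f) = ‖t‖ * N f
  N_padd : ∀ f g : X, N (f + g) ^ p ≤ N f ^ p + N g ^ p
  /-- completeness with respect to the `p`-norm -/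
  complete : ∀ u : ℕ → X,
      (∀ ε : ℝ, 0 < ε → ∃ n₀ : ℕ, ∀ m n : ℕ, n₀ ≤ m → n₀ ≤ n → N (u m - u n) < ε) →
      ∃ f : X, ∀ ε : ℝ, 0 < ε → ∃ n₀ : ℕ, ∀ n : ℕ, n₀ ≤ n → N (u n - f) < ε
  /-- the basis vectors -/
  e : ℕ → X
  /-- the biorthogonal functionals -/
  coord : ℕ → X →ₗ[𝕜] 𝕜
  biorth : ∀ n m : ℕ, coord n (e m) = if n = m then (1 : 𝕜) else 0
  /-- the closed linear span of the basis vectors is the whole space -/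
  dense_span : ∀ f : X, ∀ ε : ℝ, 0 < ε →
      ∃ g ∈ Submodule.span 𝕜 (Set.range e), N (f - g) < ε
  e_bdd : ∃ c : ℝ, ∀ n : ℕ, N (e n) ≤ c
  coord_bdd : ∃ c : ℝ, ∀ (n : ℕ) (f : X), ‖coord n f‖ ≤ c * N f

namespace PBasis

variable {𝕜 : Type*} [RCLike 𝕜] {X : Type*} [AddCommGroup X] [Module 𝕜 X] {p : ℝ}

/-- The projection `P_A f = ∑_{n ∈ A} x_n^*(f) x_n`. -/
def proj (bs : PBasis 𝕜 X p) (A : Finset ℕ) (f : X) : X :=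
  ∑ n ∈ A, bs.coord n f • bs.e n

/-- The support of `f`. -/
def supp (bs : PBasis 𝕜 X p) (f : X) : Set ℕ := {n | bs.coord n f ≠ 0}

/-- `A` is a greedy set of `f`: `min_{n ∈ A} |x_n^*(f)| ≥ max_{m ∉ A} |x_m^*(f)|`. -/
def IsGreedySet (bs : PBasis 𝕜 X p) (f : X) (A : Finset ℕ) : Prop :=
  ∀ n ∈ A, ∀ m : ℕ, m ∉ A → ‖bs.coord m f‖ ≤ ‖bs.coord n f‖

/-- `𝟙_{ε,A} = ∑_{j ∈ A} ε_j x_j`. -/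
def indSign (bs : PBasis 𝕜 X p) (ε : ℕ → 𝕜) (A : Finset ℕ) : X :=
  ∑ j ∈ A, ε j • bs.e j

/-- `𝟙_A = ∑_{j ∈ A} x_j`. -/
def ind (bs : PBasis 𝕜 X p) (A : Finset ℕ) : X := ∑ j ∈ A, bs.e j

/-- `ε` is a sign on `A`. -/
def IsSign (ε : ℕ → 𝕜) (A : Finset ℕ) : Prop := ∀ j ∈ A, ‖ε j‖ = 1

/-- `min_{n ∈ A} |x_n^*(f)|`. -/
def minCoef (bs : PBasis 𝕜 X p) (f : X) (A : Finset ℕ) : ℝ :=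
  sInf ((fun n => ‖bs.coord n f‖) '' (A : Set ℕ))

/-- `‖f − P_A(f)‖ ≤ C·σ_m(f)` for every greedy set `A` of cardinality `m`. -/
def IsGreedyWith (bs : PBasis 𝕜 X p) (C : ℝ) : Prop :=
  ∀ (f : X) (A B : Finset ℕ) (a : ℕ → 𝕜), bs.IsGreedySet f A → B.card ≤ A.card →
    bs.N (f - bs.proj A f) ≤ C * bs.N (f - ∑ j ∈ B, a j • bs.e j)

/-- `‖f − P_A(f)‖ ≤ C·ρ_m(f)` for every greedy set `A` of cardinality `m`, where
`ρ_m(f) = inf {‖f − α 𝟙_{ε,B}‖ : |B| = m, ε sign}` and `α = min_{n ∈ A} |x_n^*(f)|`. -/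
def IsRGPCCWith (bs : PBasis 𝕜 X p) (C : ℝ) : Prop :=
  ∀ (f : X) (A B : Finset ℕ) (ε : ℕ → 𝕜), bs.IsGreedySet f A → B.card = A.card →
    IsSign ε B →
    bs.N (f - bs.proj A f) ≤ C * bs.N (f - ((bs.minCoef f A : ℝ) : 𝕜) • bs.indSign ε B)

/-- `‖f − P_A(f)‖ ≤ C·ϱ_m(f)` for every greedy set `A` of cardinality `m`, where
`ϱ_m(f) = inf {‖f − α 𝟙_B‖ : |B| = m}` and `α = min_{n ∈ A} |x_n^*(f)|`. -/
def IsURGPCCWith (bs : PBasis 𝕜 X p) (C : ℝ) : Prop :=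
  ∀ (f : X) (A B : Finset ℕ), bs.IsGreedySet f A → B.card = A.card →
    bs.N (f - bs.proj A f) ≤ C * bs.N (f - ((bs.minCoef f A : ℝ) : 𝕜) • bs.ind B)

/-- `K`-unconditionality. -/
def IsUncondWith (bs : PBasis 𝕜 X p) (K : ℝ) : Prop :=
  ∀ (A : Finset ℕ) (f : X), bs.N (bs.proj A f) ≤ K * bs.N f

/-- `C`-quasi-greediness. -/
def IsQuasiGreedyWith (bs : PBasis 𝕜 X p) (C : ℝ) : Prop :=
  ∀ (f : X) (A : Finset ℕ), bs.IsGreedySet f A → bs.N (f - bs.proj A f) ≤ C * bs.N f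

/-- `C`-almost-greediness. -/
def IsAlmostGreedyWith (bs : PBasis 𝕜 X p) (C : ℝ) : Prop :=
  ∀ (f : X) (A B : Finset ℕ), bs.IsGreedySet f A → B.card ≤ A.card →
    bs.N (f - bs.proj A f) ≤ C * bs.N (f - bs.proj B f)

/-- `D`-democracy. -/
def IsDemocraticWith (bs : PBasis 𝕜 X p) (D : ℝ) : Prop :=
  ∀ A B : Finset ℕ, A.card ≤ B.card → bs.N (bs.ind A) ≤ D * bs.N (bs.ind B)

/-- `D`-superdemocracy. -/
def IsSuperdemocraticWith (bs : PBasis 𝕜 X p) (D : ℝ) : Prop :=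
  ∀ (A B : Finset ℕ) (ε η : ℕ → 𝕜), A.card ≤ B.card → IsSign ε A → IsSign η B →
    bs.N (bs.indSign ε A) ≤ D * bs.N (bs.indSign η B)

/-- `A < B`, i.e. every element of `A` is smaller than every element of `B`. -/
def FinsetBefore (A B : Finset ℕ) : Prop := ∀ a ∈ A, ∀ b ∈ B, a < b

open scoped Classical in
/-- `sgn z = z/|z|` (with the convention `sgn 0 = 1`). -/
def sgn (z : 𝕜) : 𝕜 := if z = 0 then 1 else z / ((‖z‖ : ℝ) : 𝕜)


variable {𝕜 : Type*} [RCLike 𝕜] {X : Type*} [AddCommGroup X] [Module 𝕜 X] {p : ℝ}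
variable (bs : PBasis 𝕜 X p)

lemma N_zero : bs.N 0 = 0 := (bs.N_eq_zero_iff 0).mpr rfl

lemma np_nonneg (f : X) : 0 ≤ bs.N f ^ p := Real.rpow_nonneg (bs.N_nonneg f) p

lemma np_zero (hp : 0 < p) : bs.N (0 : X) ^ p = 0 := by
  rw [bs.N_zero, Real.zero_rpow hp.ne']

lemma N_neg (f : X) : bs.N (-f) = bs.N f := by
  have h := bs.N_smul (-1 : 𝕜) f
  simpa using h

lemma np_smul (c : 𝕜) (f : X) : bs.N (c • f) ^ p = ‖c‖ ^ p * bs.N f ^ p := by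
  rw [bs.N_smul, Real.mul_rpow (norm_nonneg c) (bs.N_nonneg f)]

lemma np_sum (hp : 0 < p) {ι : Type*} (s : Finset ι) (v : ι → X) :
    bs.N (∑ i ∈ s, v i) ^ p ≤ ∑ i ∈ s, bs.N (v i) ^ p := by
  classical
  induction s using Finset.induction with
  | empty => simp [bs.np_zero hp]
  | insert x s hx ih =>
    rw [Finset.sum_insert hx, Finset.sum_insert hx]
    exact le_trans (bs.N_padd _ _) (by linarith)

lemma coord_indSign (ε : ℕ → 𝕜) (A : Finset ℕ) (n : ℕ) :
    bs.coord n (bs.indSign ε A) = if n ∈ A then ε n else 0 := by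
  classical
  rw [indSign, map_sum]
  have h : ∀ j ∈ A, bs.coord n (ε j • bs.e j) = if j = n then ε j else 0 := by
    intro j _
    rw [map_smul, bs.biorth n j, smul_eq_mul]
    by_cases hj : j = n
    · subst hj; simp
    · simp [hj, Ne.symm hj]
  rw [Finset.sum_congr rfl h, Finset.sum_ite_eq' A n ε]

lemma coord_proj (A : Finset ℕ) (f : X) (n : ℕ) :
    bs.coord n (bs.proj A f) = if n ∈ A then bs.coord n f else 0 := by
  classical
  rw [proj, map_sum]
  have h : ∀ j ∈ A, bs.coord n (bs.coord j f • bs.e j) = if j = n then bs.coord j f else 0 := by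
    intro j _
    rw [map_smul, bs.biorth n j, smul_eq_mul]
    by_cases hj : j = n
    · subst hj; simp
    · simp [hj, Ne.symm hj]
  rw [Finset.sum_congr rfl h, Finset.sum_ite_eq' A n (fun j => bs.coord j f)]

lemma indSign_empty (ε : ℕ → 𝕜) : bs.indSign ε ∅ = 0 := by simp [indSign]

lemma norm_sgn (z : 𝕜) : ‖PBasis.sgn z‖ = 1 := by
  rw [PBasis.sgn]
  split_ifs with h
  · simp
  · rw [norm_div, RCLike.norm_ofReal, abs_norm, div_self (norm_ne_zero_iff.mpr h)]

lemma rpow_le_back {a b : ℝ} (hp : 0 < p) (ha : 0 ≤ a) (hb : 0 ≤ b)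
    (h : a ^ p ≤ b ^ p) : a ≤ b := by
  by_contra hab
  push_neg at hab
  exact absurd h (not_le.mpr (Real.rpow_lt_rpow hb hab hp))

lemma norm_sub_sgn_smul (z : 𝕜) {t : ℝ} (ht : 0 ≤ t) (htz : t ≤ ‖z‖) :
    ‖z - (t : 𝕜) * PBasis.sgn z‖ = ‖z‖ - t := by
  rw [PBasis.sgn]
  split_ifs with h
  · subst h
    simp only [norm_zero] at htz
    have : t = 0 := le_antisymm htz ht
    simp [this]
  · have hz : (0:ℝ) < ‖z‖ := norm_pos_iff.mpr h
    have hzc : ((‖z‖ : ℝ) : 𝕜) ≠ 0 := by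
      simp only [ne_eq, RCLike.ofReal_eq_zero]
      exact hz.ne'
    have key : z - (t : 𝕜) * (z / ((‖z‖ : ℝ) : 𝕜)) = (((‖z‖ - t : ℝ)) : 𝕜) / ((‖z‖:ℝ):𝕜) * z := by
      push_cast
      field_simp
    rw [key, norm_mul, norm_div, RCLike.norm_ofReal, RCLike.norm_ofReal,
      abs_norm, abs_of_nonneg (by linarith : (0:ℝ) ≤ ‖z‖ - t)]
    field_simp

lemma minCoef_nonneg (f : X) (A : Finset ℕ) : 0 ≤ bs.minCoef f A := by
  apply Real.sInf_nonneg
  rintro x ⟨n, -, rfl⟩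
  exact norm_nonneg _

lemma minCoef_le (f : X) {A : Finset ℕ} {n : ℕ} (hn : n ∈ A) :
    bs.minCoef f A ≤ ‖bs.coord n f‖ := by
  apply csInf_le
  · exact ⟨0, by rintro x ⟨m, -, rfl⟩; exact norm_nonneg _⟩
  · exact ⟨n, by simpa using hn, rfl⟩

lemma le_minCoef {f : X} {A : Finset ℕ} (hA : A.Nonempty) (hg : bs.IsGreedySet f A)
    {m : ℕ} (hm : m ∉ A) : ‖bs.coord m f‖ ≤ bs.minCoef f A := by
  apply le_csInf
  · obtain ⟨n, hn⟩ := hA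
    exact ⟨‖bs.coord n f‖, ⟨n, by simpa using hn, rfl⟩⟩
  · rintro x ⟨n, hn, rfl⟩
    exact hg n (by simpa using hn) m hm

/-- All but finitely many coordinates are small. -/
lemma coords_small (h : X) {δ : ℝ} (hδ : 0 < δ) :
    ∃ S : Finset ℕ, ∀ j ∉ S, ‖bs.coord j h‖ ≤ δ := by
  classical
  obtain ⟨c, hc⟩ := bs.coord_bdd
  set c' : ℝ := max c 0 with hc'
  have hc'0 : 0 ≤ c' := le_max_right _ _
  have hδ' : 0 < δ / (c' + 1) := div_pos hδ (by linarith)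
  obtain ⟨g, hgs, hgN⟩ := bs.dense_span h (δ / (c' + 1)) hδ'
  rw [Finsupp.mem_span_range_iff_exists_finsupp] at hgs
  obtain ⟨w, hw⟩ := hgs
  refine ⟨w.support, fun j hj => ?_⟩
  have hcoord : bs.coord j g = 0 := by
    rw [← hw, map_finsuppSum, Finsupp.sum]
    apply Finset.sum_eq_zero
    intro i hi
    rw [map_smul, bs.biorth j i, smul_eq_mul]
    have : j ≠ i := fun hji => hj (hji ▸ hi)
    simp [this]
  have h1 : ‖bs.coord j h‖ = ‖bs.coord j (h - g)‖ := by
    rw [map_sub, hcoord, sub_zero]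
  have h2 : ‖bs.coord j (h - g)‖ ≤ c' * bs.N (h - g) := by
    calc ‖bs.coord j (h - g)‖ ≤ c * bs.N (h - g) := hc j (h - g)
    _ ≤ c' * bs.N (h - g) := by
        apply mul_le_mul_of_nonneg_right (le_max_left _ _) (bs.N_nonneg _)
  calc ‖bs.coord j h‖ ≤ c' * bs.N (h - g) := h1 ▸ h2
  _ ≤ c' * (δ / (c' + 1)) := mul_le_mul_of_nonneg_left hgN.le hc'0
  _ ≤ δ := by
      have hne : (c' + 1) ≠ 0 := by linarith
      have h3 : c' * (δ / (c' + 1)) ≤ (c' + 1) * (δ / (c' + 1)) :=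
        mul_le_mul_of_nonneg_right (by linarith) hδ'.le
      calc c' * (δ / (c' + 1)) ≤ (c' + 1) * (δ / (c' + 1)) := h3
      _ = δ := by rw [mul_comm, div_mul_cancel₀ δ hne]

/-- There is a fresh set of any size, disjoint from `S`, with small coordinates of `h`. -/
lemma exists_fresh (h : X) (S : Finset ℕ) (n : ℕ) {δ : ℝ} (hδ : 0 < δ) :
    ∃ F : Finset ℕ, F.card = n ∧ Disjoint F S ∧ (∀ j ∈ F, ‖bs.coord j h‖ ≤ δ) := by
  classical
  obtain ⟨S₀, hS₀⟩ := bs.coords_small h hδ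
  set T : Finset ℕ := S ∪ S₀ with hT
  set b : ℕ := T.sup id + 1 with hb
  have hbig : ∀ j : ℕ, b ≤ j → j ∉ T := by
    intro j hj hmem
    have : j ≤ T.sup id := Finset.le_sup (f := id) hmem
    omega
  refine ⟨(Finset.range n).map ⟨fun i => i + b, add_left_injective b⟩, by simp, ?_, ?_⟩
  · rw [Finset.disjoint_left]
    rintro j hj hjS
    simp only [Finset.mem_map, Finset.mem_range, Function.Embedding.coeFn_mk] at hj
    obtain ⟨i, -, rfl⟩ := hj
    exact hbig (i + b) (by omega) (Finset.mem_union_left _ hjS)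
  · intro j hj
    simp only [Finset.mem_map, Finset.mem_range, Function.Embedding.coeFn_mk] at hj
    obtain ⟨i, -, rfl⟩ := hj
    apply hS₀
    intro hmem
    exact hbig (i + b) (by omega) (Finset.mem_union_right _ hmem)

/-- There is a greedy set of any cardinality. -/
lemma exists_greedy_card (h : X) (m : ℕ) :
    ∃ Λ : Finset ℕ, Λ.card = m ∧ bs.IsGreedySet h Λ := by
  classical
  induction m with
  | zero => exact ⟨∅, rfl, by intro n hn; simp at hn⟩
  | succ m ih =>
    obtain ⟨Λ, hcard, hg⟩ := ih
    -- find an argmax of ‖coord · h‖ outside Λ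
    have hmax : ∃ j : ℕ, j ∉ Λ ∧ ∀ i : ℕ, i ∉ Λ → ‖bs.coord i h‖ ≤ ‖bs.coord j h‖ := by
      by_cases hall : ∀ i : ℕ, i ∉ Λ → bs.coord i h = 0
      · set j : ℕ := Λ.sup id + 1 with hj
        have hjΛ : j ∉ Λ := by
          intro hmem
          have : j ≤ Λ.sup id := Finset.le_sup (f := id) hmem
          omega
        refine ⟨j, hjΛ, fun i hi => ?_⟩
        rw [hall i hi, hall j hjΛ]
      · push_neg at hall
        obtain ⟨j₀, hj₀Λ, hj₀⟩ := hall
        have hδ : 0 < ‖bs.coord j₀ h‖ / 2 := by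
          have := norm_pos_iff.mpr hj₀
          linarith
        obtain ⟨S₀, hS₀⟩ := bs.coords_small h hδ
        set T : Finset ℕ := insert j₀ (S₀ \ Λ) with hT
        have hTne : T.Nonempty := ⟨j₀, Finset.mem_insert_self _ _⟩
        obtain ⟨j, hjT, hjmax⟩ := T.exists_max_image (fun i => ‖bs.coord i h‖) hTne
        have hjΛ : j ∉ Λ := by
          rcases Finset.mem_insert.mp hjT with rfl | hj
          · exact hj₀Λ
          · exact (Finset.mem_sdiff.mp hj).2
        refine ⟨j, hjΛ, fun i hi => ?_⟩
        by_cases hiT : i ∈ T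
        · exact hjmax i hiT
        · have hiS₀ : i ∉ S₀ := by
            intro hmem
            exact hiT (Finset.mem_insert_of_mem (Finset.mem_sdiff.mpr ⟨hmem, hi⟩))
          have h1 : ‖bs.coord i h‖ ≤ ‖bs.coord j₀ h‖ / 2 := hS₀ i hiS₀
          have h2 : ‖bs.coord j₀ h‖ ≤ ‖bs.coord j h‖ := hjmax j₀ (Finset.mem_insert_self _ _)
          linarith
    obtain ⟨j, hjΛ, hjmax⟩ := hmax
    refine ⟨insert j Λ, by rw [Finset.card_insert_of_notMem hjΛ, hcard], ?_⟩
    intro n hn i hi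
    have hiins : i ∉ Λ := fun hmem => hi (Finset.mem_insert_of_mem hmem)
    rcases Finset.mem_insert.mp hn with rfl | hnΛ
    · exact hjmax i hiins
    · exact hg n hnΛ i hiins

lemma proj_congr {A : Finset ℕ} {u v : X} (h : ∀ n ∈ A, bs.coord n u = bs.coord n v) :
    bs.proj A u = bs.proj A v :=
  Finset.sum_congr rfl fun n hn => by rw [h n hn]

lemma proj_eq_smul_indSign {A : Finset ℕ} {v : X} {t : 𝕜} {η : ℕ → 𝕜}
    (h : ∀ j ∈ A, bs.coord j v = t * η j) : bs.proj A v = t • bs.indSign η A := by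
  rw [indSign, Finset.smul_sum, proj]
  exact Finset.sum_congr rfl fun n hn => by rw [h n hn, smul_smul]

/-- The common strengthened hypothesis used in both directions. -/
def GoodC (bs : PBasis 𝕜 X p) (C : ℝ) : Prop :=
  ∀ (v : X) (Γ D : Finset ℕ) (ε : ℕ → 𝕜) (a : 𝕜),
    bs.IsGreedySet v Γ → D.card ≤ Γ.card → Disjoint Γ D → IsSign ε D →
    (∀ j ∈ D, bs.coord j v = a * ε j) →
    bs.N (v - bs.proj Γ v) ≤ C * bs.N (v - a • bs.indSign ε D)

lemma GoodC.quasi {C : ℝ} (hG : bs.GoodC C) {v : X} {Γ : Finset ℕ}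
    (h : bs.IsGreedySet v Γ) : bs.N (v - bs.proj Γ v) ≤ C * bs.N v := by
  have := hG v Γ ∅ (fun _ => 1) 0 h (by simp) (Finset.disjoint_empty_right _)
    (fun j hj => by simp at hj) (fun j hj => by simp at hj)
  simpa [bs.indSign_empty] using this

lemma goodC_of_almostGreedy {C : ℝ} (hAG : bs.IsAlmostGreedyWith C) : bs.GoodC C := by
  intro v Γ D ε a hg hcard hdisj hsign hcoord
  have hproj : bs.proj D v = a • bs.indSign ε D := bs.proj_eq_smul_indSign hcoord
  rw [← hproj]
  exact hAG v Γ D hg hcard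

/-- Key estimate: if `Λ` is a greedy set of `h` with all coordinates of norm `≥ s`, then
`s^p ‖𝟙_{ε,D}‖^p ≲ ‖h‖^p` for any `D` with `|D| ≤ |Λ|` and any sign `ε`. -/
lemma st_bound (hp : 0 < p) {C : ℝ} (hC : 0 < C) (hG : bs.GoodC C) (h : X)
    (Λ D : Finset ℕ) (ε : ℕ → 𝕜) {s : ℝ} (hs : 0 ≤ s)
    (hΛ : bs.IsGreedySet h Λ) (hmin : ∀ i ∈ Λ, s ≤ ‖bs.coord i h‖)
    (hcard : D.card ≤ Λ.card) (hε : IsSign ε D) :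
    s ^ p * bs.N (bs.indSign ε D) ^ p ≤
      2 ^ p * C ^ p * (2 * (C ^ p * bs.N h ^ p)) := by
  classical
  obtain ⟨ce, hce⟩ := bs.e_bdd
  set ce' : ℝ := max ce 0 with hce'
  have hce'0 : 0 ≤ ce' := le_max_right _ _
  have hq : (0:ℝ) < C ^ p := Real.rpow_pos_of_pos hC p
  have h2p : (0:ℝ) < 2 ^ p := Real.rpow_pos_of_pos (by norm_num) p
  set Kc : ℝ := 2 ^ p * C ^ p * ((C ^ p + 1) * (D.card * ce' ^ p)) with hKcdef
  have hKc : 0 ≤ Kc := by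
    have : (0:ℝ) ≤ ce' ^ p := Real.rpow_nonneg hce'0 p
    positivity
  have key : ∀ δ : ℝ, 0 < δ →
      s ^ p * bs.N (bs.indSign ε D) ^ p ≤
        2 ^ p * C ^ p * (2 * (C ^ p * bs.N h ^ p)) + Kc * δ ^ p := by
    intro δ hδ
    obtain ⟨F, hFcard, hFdisj, hFsmall⟩ := bs.exists_fresh h (Λ ∪ D) D.card hδ
    have hFD : Disjoint F D := hFdisj.mono_right (Finset.subset_union_right)
    have hFΛ : Disjoint F Λ := hFdisj.mono_right (Finset.subset_union_left)
    set η : ℕ → 𝕜 := fun _ => 1 with hη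
    set sk : 𝕜 := ((s : ℝ) : 𝕜) with hskdef
    have hsk : ‖sk‖ = s := by rw [hskdef, RCLike.norm_ofReal, abs_of_nonneg hs]
    set tk : 𝕜 := ((2 * s : ℝ) : 𝕜) with htkdef
    have htk : ‖tk‖ = 2 * s := by
      rw [htkdef, RCLike.norm_ofReal, abs_of_nonneg (by linarith)]
    -- the vector v
    set v : X := sk • bs.indSign ε D + tk • bs.indSign η F with hv
    have hcoordv : ∀ n, bs.coord n v =
        (if n ∈ D then sk * ε n else 0) + (if n ∈ F then tk else 0) := by
      intro n
      rw [hv, map_add, map_smul, map_smul, bs.coord_indSign, bs.coord_indSign,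
        smul_eq_mul, smul_eq_mul, mul_ite, mul_ite, mul_zero, mul_zero, mul_one]
    have hvD : ∀ j ∈ D, bs.coord j v = sk * ε j := by
      intro j hj
      have hjF : j ∉ F := fun hmem => (Finset.disjoint_left.mp hFD) hmem hj
      rw [hcoordv, if_pos hj, if_neg hjF, add_zero]
    have hvF : ∀ j ∈ F, bs.coord j v = tk := by
      intro j hj
      have hjD : j ∉ D := fun hmem => (Finset.disjoint_left.mp hFD) hj hmem
      rw [hcoordv, if_neg hjD, if_pos hj, zero_add]
    have hgv : bs.IsGreedySet v F := by
      intro n hn m hm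
      rw [hvF n hn, htk, hcoordv m, if_neg hm, add_zero]
      by_cases hmD : m ∈ D
      · rw [if_pos hmD, norm_mul, hsk, hε m hmD, mul_one]; linarith
      · rw [if_neg hmD, norm_zero]; linarith
    have step1 : s * bs.N (bs.indSign ε D) ≤ C * (2 * s * bs.N (bs.indSign η F)) := by
      have happ := hG v F D ε sk hgv hFcard.symm.le hFD hε hvD
      have hprojF : bs.proj F v = tk • bs.indSign η F :=
        bs.proj_eq_smul_indSign (fun j hj => by rw [hvF j hj, hη, mul_one])
      have e1 : v - bs.proj F v = sk • bs.indSign ε D := by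
        rw [hprojF, hv, add_sub_cancel_right]
      have e2 : v - sk • bs.indSign ε D = tk • bs.indSign η F := by
        rw [hv, add_sub_cancel_left]
      rw [e1, e2, bs.N_smul, bs.N_smul, hsk, htk] at happ
      exact happ
    -- the vector u
    set u : X := h - bs.proj F h + sk • bs.indSign η F with hu
    have hcoordu : ∀ n, bs.coord n u =
        bs.coord n h - (if n ∈ F then bs.coord n h else 0) + (if n ∈ F then sk else 0) := by
      intro n
      rw [hu, map_add, map_sub, map_smul, bs.coord_proj, bs.coord_indSign,
        smul_eq_mul, mul_ite, mul_zero, mul_one]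
    have huΛ : ∀ n ∈ Λ, bs.coord n u = bs.coord n h := by
      intro n hn
      have hnF : n ∉ F := fun hmem => (Finset.disjoint_left.mp hFΛ) hmem hn
      rw [hcoordu, if_neg hnF, if_neg hnF, sub_zero, add_zero]
    have huF : ∀ j ∈ F, bs.coord j u = sk := by
      intro j hj
      rw [hcoordu, if_pos hj, if_pos hj, sub_self, zero_add]
    have hgu : bs.IsGreedySet u Λ := by
      intro n hn m hm
      rw [huΛ n hn]
      by_cases hmF : m ∈ F
      · rw [huF m hmF, hsk]; exact hmin n hn
      · rw [hcoordu, if_neg hmF, if_neg hmF, sub_zero, add_zero]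
        exact hΛ n hn m hm
    have step2 : bs.N (u - bs.proj Λ h) ≤ C * bs.N (h - bs.proj F h) := by
      have happ := hG u Λ F η sk hgu (by rw [hFcard]; exact hcard) hFΛ.symm
        (fun j _ => by rw [hη]; exact norm_one) (fun j hj => by rw [huF j hj, hη, mul_one])
      have e1 : bs.proj Λ u = bs.proj Λ h := bs.proj_congr huΛ
      have e2 : u - sk • bs.indSign η F = h - bs.proj F h := by
        rw [hu, add_sub_cancel_right]
      rw [e1, e2] at happ
      exact happ
    have step3 : bs.N (h - bs.proj Λ h) ≤ C * bs.N h := hG.quasi bs hΛ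
    -- small error term
    set E : ℝ := (D.card : ℝ) * (δ ^ p * ce' ^ p) with hEdef
    have hE0 : 0 ≤ E := by
      have h1 : (0:ℝ) ≤ δ ^ p := Real.rpow_nonneg hδ.le p
      have h2 : (0:ℝ) ≤ ce' ^ p := Real.rpow_nonneg hce'0 p
      positivity
    have step4 : bs.N (bs.proj F h) ^ p ≤ E := by
      calc bs.N (bs.proj F h) ^ p ≤ ∑ j ∈ F, bs.N (bs.coord j h • bs.e j) ^ p :=
            bs.np_sum hp F _
      _ ≤ ∑ _j ∈ F, δ ^ p * ce' ^ p := by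
          apply Finset.sum_le_sum
          intro j hj
          rw [bs.np_smul]
          apply mul_le_mul
          · exact Real.rpow_le_rpow (norm_nonneg _) (hFsmall j hj) hp.le
          · exact Real.rpow_le_rpow (bs.N_nonneg _)
              ((hce j).trans (le_max_left _ _)) hp.le
          · exact bs.np_nonneg _
          · exact Real.rpow_nonneg hδ.le p
      _ = E := by rw [Finset.sum_const, hFcard, hEdef, nsmul_eq_mul]
    -- assemble the bound for s^p * N(𝟙_{η,F})^p
    have hid : sk • bs.indSign η F = (u - bs.proj Λ h) - (h - bs.proj Λ h) + bs.proj F h := by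
      rw [hu]; abel
    have hFbound : s ^ p * bs.N (bs.indSign η F) ^ p ≤
        2 * (C ^ p * bs.N h ^ p) + (C ^ p + 1) * E := by
      have t1 : bs.N (sk • bs.indSign η F) ^ p ≤
          bs.N (u - bs.proj Λ h) ^ p + bs.N (h - bs.proj Λ h) ^ p + bs.N (bs.proj F h) ^ p := by
        rw [hid]
        refine le_trans (bs.N_padd _ _) ?_
        have := bs.N_padd (u - bs.proj Λ h) (-(h - bs.proj Λ h))
        rw [bs.N_neg] at this
        have heq : (u - bs.proj Λ h) - (h - bs.proj Λ h)
            = (u - bs.proj Λ h) + (-(h - bs.proj Λ h)) := by abel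
        rw [heq]
        linarith
      have t2 : bs.N (u - bs.proj Λ h) ^ p ≤ C ^ p * (bs.N h ^ p + bs.N (bs.proj F h) ^ p) := by
        calc bs.N (u - bs.proj Λ h) ^ p ≤ (C * bs.N (h - bs.proj F h)) ^ p :=
              Real.rpow_le_rpow (bs.N_nonneg _) step2 hp.le
        _ = C ^ p * bs.N (h - bs.proj F h) ^ p := Real.mul_rpow hC.le (bs.N_nonneg _)
        _ ≤ C ^ p * (bs.N h ^ p + bs.N (bs.proj F h) ^ p) := by
            apply mul_le_mul_of_nonneg_left _ hq.le
            have := bs.N_padd h (-(bs.proj F h))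
            rw [bs.N_neg] at this
            have heq : h - bs.proj F h = h + (-(bs.proj F h)) := by abel
            rw [heq]; exact this
      have t3 : bs.N (h - bs.proj Λ h) ^ p ≤ C ^ p * bs.N h ^ p := by
        calc bs.N (h - bs.proj Λ h) ^ p ≤ (C * bs.N h) ^ p :=
              Real.rpow_le_rpow (bs.N_nonneg _) step3 hp.le
        _ = C ^ p * bs.N h ^ p := Real.mul_rpow hC.le (bs.N_nonneg _)
      have t4 : bs.N (sk • bs.indSign η F) ^ p = s ^ p * bs.N (bs.indSign η F) ^ p := by
        rw [bs.np_smul, hsk]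
      rw [t4] at t1
      nlinarith [step4, bs.np_nonneg (bs.proj F h), hq.le]
    -- conclude
    have final : s ^ p * bs.N (bs.indSign ε D) ^ p ≤
        2 ^ p * C ^ p * (s ^ p * bs.N (bs.indSign η F) ^ p) := by
      have r1 : (s * bs.N (bs.indSign ε D)) ^ p ≤ (C * (2 * s * bs.N (bs.indSign η F))) ^ p :=
        Real.rpow_le_rpow (mul_nonneg hs (bs.N_nonneg _)) step1 hp.le
      have e1 : (s * bs.N (bs.indSign ε D)) ^ p = s ^ p * bs.N (bs.indSign ε D) ^ p :=
        Real.mul_rpow hs (bs.N_nonneg _)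
      have e2 : (C * (2 * s * bs.N (bs.indSign η F))) ^ p
          = C ^ p * (2 ^ p * (s ^ p * bs.N (bs.indSign η F) ^ p)) := by
        rw [Real.mul_rpow hC.le (mul_nonneg (by linarith) (bs.N_nonneg _)),
          Real.mul_rpow (by linarith : (0:ℝ) ≤ 2 * s) (bs.N_nonneg _),
          Real.mul_rpow (by norm_num : (0:ℝ) ≤ (2:ℝ)) hs]
        ring
      rw [e1, e2] at r1
      calc s ^ p * bs.N (bs.indSign ε D) ^ p ≤
          C ^ p * (2 ^ p * (s ^ p * bs.N (bs.indSign η F) ^ p)) := r1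
      _ = 2 ^ p * C ^ p * (s ^ p * bs.N (bs.indSign η F) ^ p) := by ring
    calc s ^ p * bs.N (bs.indSign ε D) ^ p ≤
        2 ^ p * C ^ p * (s ^ p * bs.N (bs.indSign η F) ^ p) := final
    _ ≤ 2 ^ p * C ^ p * (2 * (C ^ p * bs.N h ^ p) + (C ^ p + 1) * E) := by
        apply mul_le_mul_of_nonneg_left hFbound (by positivity)
    _ = 2 ^ p * C ^ p * (2 * (C ^ p * bs.N h ^ p)) + Kc * δ ^ p := by
        rw [hKcdef, hEdef]; ring
  -- limit δ → 0
  by_contra hcon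
  push_neg at hcon
  set L : ℝ := s ^ p * bs.N (bs.indSign ε D) ^ p with hL
  set R : ℝ := 2 ^ p * C ^ p * (2 * (C ^ p * bs.N h ^ p)) with hR
  have hϵ : 0 < L - R := sub_pos.mpr hcon
  set δ : ℝ := ((L - R) / (Kc + 1)) ^ (1 / p) with hδdef
  have hδpos : 0 < δ := Real.rpow_pos_of_pos (div_pos hϵ (by linarith)) _
  have hδp : δ ^ p = (L - R) / (Kc + 1) := by
    rw [hδdef, ← Real.rpow_mul (le_of_lt (div_pos hϵ (by linarith))),
      one_div_mul_cancel hp.ne', Real.rpow_one]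
  have hkey := key δ hδpos
  rw [hδp] at hkey
  have hfin : Kc * ((L - R) / (Kc + 1)) < L - R := by
    have h1 : Kc * ((L - R) / (Kc + 1)) < (Kc + 1) * ((L - R) / (Kc + 1)) :=
      mul_lt_mul_of_pos_right (by linarith) (div_pos hϵ (by linarith))
    have h2 : (Kc + 1) * ((L - R) / (Kc + 1)) = L - R := by
      field_simp
    linarith
  linarith

/-- Convexity-type lemma: coefficients bounded by `α` are controlled by sign indicators. -/
lemma convexity (hp : 0 < p) (D₀ : Finset ℕ) (c : ℕ → 𝕜) {α M : ℝ}
    (hα : 0 ≤ α) (hM : 0 ≤ M) (hc : ∀ m ∈ D₀, ‖c m‖ ≤ α)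
    (hMb : ∀ D : Finset ℕ, D ⊆ D₀ → ∀ ε : ℕ → 𝕜, IsSign ε D →
      α ^ p * bs.N (bs.indSign ε D) ^ p ≤ M) :
    bs.N (∑ m ∈ D₀, c m • bs.e m) ^ p ≤ M / (1 - 2 ^ (-p)) := by
  classical
  set r : ℝ := 2 ^ (-p) with hrdef
  have hr0 : 0 < r := Real.rpow_pos_of_pos (by norm_num) _
  have hr1 : r < 1 := by
    rw [hrdef]
    have : (2:ℝ) ^ (-p) < 2 ^ (0:ℝ) :=
      Real.rpow_lt_rpow_left_iff (by norm_num) |>.mpr (by linarith)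
    simpa using this
  have h1r : 0 < 1 - r := by linarith
  set R : ℝ := r / (1 - r) with hRdef
  have hR0 : 0 ≤ R := le_of_lt (div_pos hr0 h1r)
  set T : ℝ := ∑ m ∈ D₀, bs.N (bs.e m) ^ p with hTdef
  have hT0 : 0 ≤ T := Finset.sum_nonneg fun m _ => bs.np_nonneg _
  have hhalf : ((1:ℝ)/2) ^ p = r := by
    rw [hrdef, Real.rpow_neg (by norm_num : (0:ℝ) ≤ 2)]
    rw [one_div, Real.inv_rpow (by norm_num : (0:ℝ) ≤ 2)]
  -- main induction
  have main : ∀ K : ℕ, ∀ β : ℝ, 0 ≤ β → β ≤ 1 → ∀ c : ℕ → 𝕜,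
      (∀ m ∈ D₀, ‖c m‖ ≤ α * β) →
      bs.N (∑ m ∈ D₀, c m • bs.e m) ^ p ≤ β ^ p * (M * R + r ^ K * (α ^ p * T)) := by
    intro K
    induction K with
    | zero =>
      intro β hβ0 hβ1 c hcb
      have base : bs.N (∑ m ∈ D₀, c m • bs.e m) ^ p ≤ (α * β) ^ p * T := by
        calc bs.N (∑ m ∈ D₀, c m • bs.e m) ^ p ≤ ∑ m ∈ D₀, bs.N (c m • bs.e m) ^ p :=
              bs.np_sum hp _ _
        _ ≤ ∑ m ∈ D₀, (α * β) ^ p * bs.N (bs.e m) ^ p := by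
            apply Finset.sum_le_sum
            intro m hm
            rw [bs.np_smul]
            exact mul_le_mul_of_nonneg_right
              (Real.rpow_le_rpow (norm_nonneg _) (hcb m hm) hp.le) (bs.np_nonneg _)
        _ = (α * β) ^ p * T := by rw [hTdef, Finset.mul_sum]
      have e1 : (α * β) ^ p = β ^ p * α ^ p := by
        rw [Real.mul_rpow hα hβ0]; ring
      have hMR : 0 ≤ β ^ p * (M * R) := by
        have := Real.rpow_nonneg hβ0 p
        positivity
      calc bs.N (∑ m ∈ D₀, c m • bs.e m) ^ p ≤ (α * β) ^ p * T := base
      _ = β ^ p * (α ^ p * T) := by rw [e1]; ring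
      _ ≤ β ^ p * (M * R + r ^ 0 * (α ^ p * T)) := by
          rw [pow_zero, one_mul, mul_add]
          have := Real.rpow_nonneg hβ0 p
          nlinarith
    | succ K ih =>
      intro β hβ0 hβ1 c hcb
      set γ : ℝ := α * β / 2 with hγdef
      have hγ0 : 0 ≤ γ := by positivity
      set D' : Finset ℕ := D₀.filter (fun m => γ < ‖c m‖) with hD'def
      set ε : ℕ → 𝕜 := fun m => PBasis.sgn (c m) with hεdef
      set c' : ℕ → 𝕜 := fun m => if γ < ‖c m‖ then c m - (γ:𝕜) * PBasis.sgn (c m) else c m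
        with hc'def
      have hsplit : ∑ m ∈ D₀, c m • bs.e m
          = ((γ:ℝ):𝕜) • bs.indSign ε D' + ∑ m ∈ D₀, c' m • bs.e m := by
        have h1 : ((γ:ℝ):𝕜) • bs.indSign ε D'
            = ∑ m ∈ D₀, (if γ < ‖c m‖ then ((γ:𝕜) * ε m) • bs.e m else 0) := by
          rw [indSign, Finset.smul_sum, ← Finset.sum_filter, hD'def]
          exact Finset.sum_congr rfl fun m hm => by rw [smul_smul]
        rw [h1, ← Finset.sum_add_distrib]
        apply Finset.sum_congr rfl
        intro m hm
        by_cases hmγ : γ < ‖c m‖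
        · rw [if_pos hmγ, hc'def]
          simp only [if_pos hmγ]
          rw [← add_smul, hεdef]
          congr 1
          ring
        · rw [if_neg hmγ, hc'def]
          simp only [if_neg hmγ]
          rw [zero_add]
      have hc'b : ∀ m ∈ D₀, ‖c' m‖ ≤ α * (β / 2) := by
        intro m hm
        rw [hc'def]
        by_cases hmγ : γ < ‖c m‖
        · simp only [if_pos hmγ]
          rw [norm_sub_sgn_smul (c m) hγ0 hmγ.le]
          have := hcb m hm
          rw [hγdef] at *
          linarith [hcb m hm]
        · simp only [if_neg hmγ]
          push_neg at hmγ
          rw [hγdef] at hmγ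
          linarith [hmγ]
      have hIH := ih (β / 2) (by linarith) (by linarith) c' hc'b
      have hsign : α ^ p * bs.N (bs.indSign ε D') ^ p ≤ M :=
        hMb D' (Finset.filter_subset _ _) ε (fun j _ => norm_sgn _)
      have hind : bs.N (((γ:ℝ):𝕜) • bs.indSign ε D') ^ p ≤ (β / 2) ^ p * M := by
        rw [bs.np_smul, RCLike.norm_ofReal, abs_of_nonneg hγ0]
        have e1 : γ ^ p = (β / 2) ^ p * α ^ p := by
          rw [hγdef]
          have : α * β / 2 = α * (β / 2) := by ring
          rw [this, Real.mul_rpow hα (by linarith)]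
          ring
        rw [e1, mul_assoc]
        exact mul_le_mul_of_nonneg_left hsign (Real.rpow_nonneg (by linarith) _)
      have hβ2 : (β / 2) ^ p = β ^ p * r := by
        have : β / 2 = β * (1/2) := by ring
        rw [this, Real.mul_rpow hβ0 (by norm_num), hhalf]
      calc bs.N (∑ m ∈ D₀, c m • bs.e m) ^ p
          ≤ bs.N (((γ:ℝ):𝕜) • bs.indSign ε D') ^ p + bs.N (∑ m ∈ D₀, c' m • bs.e m) ^ p := by
            rw [hsplit]; exact bs.N_padd _ _
      _ ≤ (β / 2) ^ p * M + (β / 2) ^ p * (M * R + r ^ K * (α ^ p * T)) := by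
            exact add_le_add hind hIH
      _ = β ^ p * (M * (r * (1 + R)) + r ^ (K + 1) * (α ^ p * T)) := by
            rw [hβ2]; ring
      _ = β ^ p * (M * R + r ^ (K + 1) * (α ^ p * T)) := by
            have : r * (1 + R) = R := by
              rw [hRdef]; field_simp; ring
            rw [this]
  -- take the limit K → ∞
  have allK : ∀ K : ℕ, bs.N (∑ m ∈ D₀, c m • bs.e m) ^ p ≤ M * R + r ^ K * (α ^ p * T) := by
    intro K
    have := main K 1 (by norm_num) (le_refl 1) c (by simpa using hc)
    simpa using this
  have lim : bs.N (∑ m ∈ D₀, c m • bs.e m) ^ p ≤ M * R := by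
    by_contra hcon
    push_neg at hcon
    set L : ℝ := bs.N (∑ m ∈ D₀, c m • bs.e m) ^ p with hLdef
    have hϵ : 0 < L - M * R := sub_pos.mpr hcon
    by_cases hT : α ^ p * T = 0
    · have := allK 0
      rw [hT] at this
      simp at this
      linarith
    · have hTpos : 0 < α ^ p * T := lt_of_le_of_ne
        (mul_nonneg (Real.rpow_nonneg hα p) hT0) (Ne.symm hT)
      obtain ⟨K, hK⟩ := exists_pow_lt_of_lt_one
        (div_pos hϵ hTpos) hr1
      have := allK K
      have h2 : r ^ K * (α ^ p * T) < L - M * R := by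
        have := mul_lt_mul_of_pos_right hK hTpos
        rw [div_mul_cancel₀ _ (ne_of_gt hTpos)] at this
        linarith
      linarith
  calc bs.N (∑ m ∈ D₀, c m • bs.e m) ^ p ≤ M * R := lim
  _ ≤ M / (1 - r) := by
      rw [hRdef, div_eq_mul_inv, div_eq_mul_inv, ← mul_assoc]
      apply mul_le_mul_of_nonneg_right _ (inv_nonneg.mpr h1r.le)
      nlinarith

lemma proj_split (A B : Finset ℕ) (f : X) :
    bs.proj A f = bs.proj (A \ B) f + bs.proj (A ∩ B) f := by
  classical
  rw [proj, proj, proj, ← Finset.sum_union (Finset.disjoint_sdiff_inter A B),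
    Finset.sdiff_union_inter]

lemma proj_smul_indSign (Λ B : Finset ℕ) (ε : ℕ → 𝕜) (a : 𝕜) :
    bs.proj Λ (a • bs.indSign ε B) = a • bs.indSign ε (B ∩ Λ) := by
  classical
  rw [proj]
  have h1 : ∀ n ∈ Λ, bs.coord n (a • bs.indSign ε B) • bs.e n
      = if n ∈ B then (a * ε n) • bs.e n else 0 := by
    intro n _
    rw [map_smul, bs.coord_indSign, smul_eq_mul]
    by_cases hnB : n ∈ B
    · rw [if_pos hnB, if_pos hnB]
    · rw [if_neg hnB, if_neg hnB, mul_zero, zero_smul]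
  rw [Finset.sum_congr rfl h1, ← Finset.sum_filter, Finset.filter_mem_eq_inter,
    Finset.inter_comm, indSign, Finset.smul_sum]
  exact Finset.sum_congr rfl fun n _ => by rw [smul_smul]

lemma indSign_split (ε : ℕ → 𝕜) (B Λ : Finset ℕ) :
    bs.indSign ε B = bs.indSign ε (B ∩ Λ) + bs.indSign ε (B \ Λ) := by
  classical
  rw [indSign, indSign, indSign, ← Finset.sum_union (Finset.disjoint_sdiff_inter B Λ).symm]
  congr 1
  rw [Finset.union_comm, Finset.sdiff_union_inter]

/-- Forward direction core estimate. -/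
lemma forward_core (hp : 0 < p) {C : ℝ} (hC : 0 < C) (hAG : bs.IsAlmostGreedyWith C)
    (f : X) (A B : Finset ℕ) (ε : ℕ → 𝕜) (a : 𝕜)
    (hA : bs.IsGreedySet f A) (hBA : B.card ≤ A.card) (hd : Disjoint A B)
    (hsign : IsSign ε B) :
    bs.N (f - bs.proj A f) ^ p ≤
      (C ^ p * C ^ p * (1 + 2 ^ p * 2 ^ p * 2 * C ^ p)) *
        bs.N (f - a • bs.indSign ε B) ^ p := by
  classical
  have hG : bs.GoodC C := bs.goodC_of_almostGreedy hAG
  have hq : (0:ℝ) < C ^ p := Real.rpow_pos_of_pos hC p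
  have h2p : (0:ℝ) < 2 ^ p := Real.rpow_pos_of_pos (by norm_num) p
  set g : X := f - a • bs.indSign ε B with hgdef
  obtain ⟨Λ, hΛcard, hΛg⟩ := bs.exists_greedy_card g A.card
  -- step 1 : almost greediness with competitor Λ
  have step1 : bs.N (f - bs.proj A f) ≤ C * bs.N (f - bs.proj Λ f) :=
    hAG f A Λ hA hΛcard.le
  -- the key identity
  have hfg : f = g + a • bs.indSign ε B := by rw [hgdef]; abel
  have hproj : bs.proj Λ f = bs.proj Λ g + a • bs.indSign ε (B ∩ Λ) := by
    have h1 : bs.proj Λ f = ∑ n ∈ Λ, (bs.coord n g • bs.e n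
        + bs.coord n (a • bs.indSign ε B) • bs.e n) := by
      rw [proj]
      apply Finset.sum_congr rfl
      intro n _
      rw [← add_smul, ← map_add, ← hfg]
    rw [h1, Finset.sum_add_distrib, ← proj, ← proj, bs.proj_smul_indSign]
  have hkey : f - bs.proj Λ f = (g - bs.proj Λ g) + a • bs.indSign ε (B \ Λ) := by
    rw [hproj]
    nth_rewrite 1 [hfg]
    rw [bs.indSign_split ε B Λ, smul_add]
    abel
  -- quasi-greediness for g
  have step2 : bs.N (g - bs.proj Λ g) ^ p ≤ C ^ p * bs.N g ^ p := by
    calc bs.N (g - bs.proj Λ g) ^ p ≤ (C * bs.N g) ^ p :=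
          Real.rpow_le_rpow (bs.N_nonneg _) (hG.quasi bs hΛg) hp.le
    _ = C ^ p * bs.N g ^ p := Real.mul_rpow hC.le (bs.N_nonneg _)
  -- bound the sign-indicator term
  have step3 : bs.N (a • bs.indSign ε (B \ Λ)) ^ p ≤
      2 ^ p * (2 ^ p * C ^ p * (2 * (C ^ p * bs.N g ^ p))) := by
    by_cases hBΛ : B \ Λ = ∅
    · rw [hBΛ, bs.indSign_empty, smul_zero, bs.np_zero hp]
      exact mul_nonneg h2p.le (mul_nonneg (mul_nonneg h2p.le hq.le)
        (mul_nonneg (by norm_num) (mul_nonneg hq.le (bs.np_nonneg g))))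
    · obtain ⟨m₀, hm₀⟩ := Finset.nonempty_iff_ne_empty.mpr hBΛ
      have hm₀B : m₀ ∈ B := (Finset.mem_sdiff.mp hm₀).1
      have hm₀Λ : m₀ ∉ Λ := (Finset.mem_sdiff.mp hm₀).2
      have hm₀A : m₀ ∉ A := fun hmem => (Finset.disjoint_left.mp hd) hmem hm₀B
      have hAne : A.Nonempty := by
        rw [← Finset.card_pos]
        have : 0 < B.card := Finset.card_pos.mpr ⟨m₀, hm₀B⟩
        omega
      set α : ℝ := bs.minCoef f A with hαdef
      have hα0 : 0 ≤ α := bs.minCoef_nonneg f A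
      set s : ℝ := max α ‖bs.coord m₀ g‖ with hsdef
      have hs0 : 0 ≤ s := le_trans hα0 (le_max_left _ _)
      -- coordinates of g agree with f on A
      have hcoordA : ∀ n ∈ A, bs.coord n g = bs.coord n f := by
        intro n hn
        have hnB : n ∉ B := fun hmem => (Finset.disjoint_left.mp hd) hn hmem
        rw [hgdef, map_sub, map_smul, bs.coord_indSign, if_neg hnB, smul_eq_mul,
          mul_zero, sub_zero]
      -- min bound on Λ
      have hminΛ : ∀ i ∈ Λ, s ≤ ‖bs.coord i g‖ := by
        intro i hi
        apply max_le
        · by_contra hlt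
          push_neg at hlt
          have hAΛ : A ⊆ Λ := by
            intro j hj
            by_contra hjΛ
            have h1 : ‖bs.coord j g‖ ≤ ‖bs.coord i g‖ := hΛg i hi j hjΛ
            have h2 : α ≤ ‖bs.coord j f‖ := bs.minCoef_le f hj
            rw [← hcoordA j hj] at h2
            linarith
          have hAeq : A = Λ := Finset.eq_of_subset_of_card_le hAΛ hΛcard.le
          have hiA : i ∈ A := hAeq ▸ hi
          have := bs.minCoef_le f hiA
          rw [← hcoordA i hiA] at this
          linarith
        · exact hΛg i hi m₀ hm₀Λ
      -- |a| ≤ 2s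
      have ha2s : ‖a‖ ≤ 2 * s := by
        have h1 : bs.coord m₀ (a • bs.indSign ε B) = a * ε m₀ := by
          rw [map_smul, bs.coord_indSign, if_pos hm₀B, smul_eq_mul]
        have h2 : a * ε m₀ = bs.coord m₀ f - bs.coord m₀ g := by
          rw [← h1, hgdef, map_sub]; abel
        have h3 : ‖a‖ = ‖a * ε m₀‖ := by rw [norm_mul, hsign m₀ hm₀B, mul_one]
        have h4 : ‖bs.coord m₀ f - bs.coord m₀ g‖ ≤ ‖bs.coord m₀ f‖ + ‖bs.coord m₀ g‖ :=
          norm_sub_le _ _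
        have h5 : ‖bs.coord m₀ f‖ ≤ α := bs.le_minCoef hAne hA hm₀A
        have h6 : α ≤ s := le_max_left _ _
        have h7 : ‖bs.coord m₀ g‖ ≤ s := le_max_right _ _
        rw [h3, h2]
        linarith
      -- apply the key estimate
      have hst := bs.st_bound hp hC hG g Λ (B \ Λ) ε hs0 hΛg hminΛ
        (le_trans (Finset.card_le_card (Finset.sdiff_subset)) (hΛcard ▸ hBA))
        (fun j hj => hsign j (Finset.mem_sdiff.mp hj).1)
      have hnorm : bs.N (a • bs.indSign ε (B \ Λ)) ^ p
          = ‖a‖ ^ p * bs.N (bs.indSign ε (B \ Λ)) ^ p := bs.np_smul _ _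
      have ha2sp : ‖a‖ ^ p ≤ 2 ^ p * s ^ p := by
        calc ‖a‖ ^ p ≤ (2 * s) ^ p := Real.rpow_le_rpow (norm_nonneg _) ha2s hp.le
        _ = 2 ^ p * s ^ p := Real.mul_rpow (by norm_num) hs0
      calc bs.N (a • bs.indSign ε (B \ Λ)) ^ p
          = ‖a‖ ^ p * bs.N (bs.indSign ε (B \ Λ)) ^ p := hnorm
      _ ≤ (2 ^ p * s ^ p) * bs.N (bs.indSign ε (B \ Λ)) ^ p :=
          mul_le_mul_of_nonneg_right ha2sp (bs.np_nonneg _)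
      _ = 2 ^ p * (s ^ p * bs.N (bs.indSign ε (B \ Λ)) ^ p) := by ring
      _ ≤ 2 ^ p * (2 ^ p * C ^ p * (2 * (C ^ p * bs.N g ^ p))) :=
          mul_le_mul_of_nonneg_left hst h2p.le
  -- put everything together
  have step4 : bs.N (f - bs.proj Λ f) ^ p ≤
      C ^ p * bs.N g ^ p + 2 ^ p * (2 ^ p * C ^ p * (2 * (C ^ p * bs.N g ^ p))) := by
    rw [hkey]
    refine le_trans (bs.N_padd _ _) ?_
    exact add_le_add step2 step3
  have step5 : bs.N (f - bs.proj A f) ^ p ≤ C ^ p * bs.N (f - bs.proj Λ f) ^ p := by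
    calc bs.N (f - bs.proj A f) ^ p ≤ (C * bs.N (f - bs.proj Λ f)) ^ p :=
          Real.rpow_le_rpow (bs.N_nonneg _) step1 hp.le
    _ = C ^ p * bs.N (f - bs.proj Λ f) ^ p := Real.mul_rpow hC.le (bs.N_nonneg _)
  calc bs.N (f - bs.proj A f) ^ p ≤ C ^ p * bs.N (f - bs.proj Λ f) ^ p := step5
  _ ≤ C ^ p * (C ^ p * bs.N g ^ p + 2 ^ p * (2 ^ p * C ^ p * (2 * (C ^ p * bs.N g ^ p)))) :=
      mul_le_mul_of_nonneg_left step4 hq.le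
  _ = (C ^ p * C ^ p * (1 + 2 ^ p * 2 ^ p * 2 * C ^ p)) * bs.N g ^ p := by ring

/-- Backward direction core estimate. -/
lemma backward_core (hp : 0 < p) {C : ℝ} (hC : 0 < C) (hG : bs.GoodC C)
    (f : X) (A B : Finset ℕ) (hA : bs.IsGreedySet f A) (hBA : B.card ≤ A.card)
    (hAne : A.Nonempty) :
    bs.N (f - bs.proj A f) ^ p ≤
      (C ^ p + 2 ^ p * C ^ p * (2 * C ^ p) / (1 - 2 ^ (-p))) *
        bs.N (f - bs.proj B f) ^ p := by
  classical
  have hq : (0:ℝ) < C ^ p := Real.rpow_pos_of_pos hC p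
  have h2p : (0:ℝ) < 2 ^ p := Real.rpow_pos_of_pos (by norm_num) p
  have hr1 : (2:ℝ) ^ (-p) < 1 := by
    have : (2:ℝ) ^ (-p) < 2 ^ (0:ℝ) :=
      Real.rpow_lt_rpow_left_iff (by norm_num) |>.mpr (by linarith)
    simpa using this
  have h1r : (0:ℝ) < 1 - 2 ^ (-p) := by linarith
  set g : X := f - bs.proj B f with hgdef
  have hcoordg : ∀ n, bs.coord n g
      = bs.coord n f - (if n ∈ B then bs.coord n f else 0) := by
    intro n
    rw [hgdef, map_sub, bs.coord_proj]
  -- A \ B is a greedy set of g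
  have hgreedy : bs.IsGreedySet g (A \ B) := by
    intro n hn m hm
    obtain ⟨hnA, hnB⟩ := Finset.mem_sdiff.mp hn
    have hng : bs.coord n g = bs.coord n f := by rw [hcoordg, if_neg hnB, sub_zero]
    by_cases hmB : m ∈ B
    · rw [hcoordg, if_pos hmB, sub_self, norm_zero]
      exact norm_nonneg _
    · have hmA : m ∉ A := fun hmem => hm (Finset.mem_sdiff.mpr ⟨hmem, hmB⟩)
      rw [hcoordg, if_neg hmB, sub_zero, hng]
      exact hA n hnA m hmA
  -- coordinates of g agree with f on A \ B
  have hcoordAB : ∀ n ∈ A \ B, bs.coord n g = bs.coord n f := by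
    intro n hn
    rw [hcoordg, if_neg (Finset.mem_sdiff.mp hn).2, sub_zero]
  -- key identity
  have hkey : f - bs.proj A f = (g - bs.proj (A \ B) g) + bs.proj (B \ A) f := by
    have h1 : bs.proj (A \ B) g = bs.proj (A \ B) f := bs.proj_congr hcoordAB
    rw [h1, hgdef, bs.proj_split A B, bs.proj_split B A,
      Finset.inter_comm B A]
    abel
  -- quasi-greedy bound
  have step1 : bs.N (g - bs.proj (A \ B) g) ^ p ≤ C ^ p * bs.N g ^ p := by
    calc bs.N (g - bs.proj (A \ B) g) ^ p ≤ (C * bs.N g) ^ p :=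
          Real.rpow_le_rpow (bs.N_nonneg _) (hG.quasi bs hgreedy) hp.le
    _ = C ^ p * bs.N g ^ p := Real.mul_rpow hC.le (bs.N_nonneg _)
  -- convexity bound for the remainder
  set α : ℝ := bs.minCoef f A with hαdef
  have hα0 : 0 ≤ α := bs.minCoef_nonneg f A
  set M : ℝ := 2 ^ p * C ^ p * (2 * (C ^ p * bs.N g ^ p)) with hMdef
  have hM0 : 0 ≤ M := by
    have := bs.np_nonneg g
    have := hq.le
    have := h2p.le
    positivity
  have hcardBA : (B \ A).card ≤ (A \ B).card := by
    have h1 := Finset.card_sdiff_add_card_inter B A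
    have h2 := Finset.card_sdiff_add_card_inter A B
    have h3 : (B ∩ A).card = (A ∩ B).card := by rw [Finset.inter_comm]
    omega
  have hMb : ∀ D : Finset ℕ, D ⊆ B \ A → ∀ ε : ℕ → 𝕜, IsSign ε D →
      α ^ p * bs.N (bs.indSign ε D) ^ p ≤ M := by
    intro D hD ε hε
    exact bs.st_bound hp hC hG g (A \ B) D ε hα0 hgreedy
      (fun i hi => by
        rw [hcoordAB i hi]
        exact bs.minCoef_le f (Finset.mem_sdiff.mp hi).1)
      (le_trans (Finset.card_le_card hD) hcardBA) hε
  have hcoefB : ∀ m ∈ B \ A, ‖bs.coord m f‖ ≤ α := by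
    intro m hm
    exact bs.le_minCoef hAne hA (Finset.mem_sdiff.mp hm).2
  have step2 : bs.N (bs.proj (B \ A) f) ^ p ≤ M / (1 - 2 ^ (-p)) := by
    have := bs.convexity hp (B \ A) (fun m => bs.coord m f) hα0 hM0 hcoefB hMb
    rw [proj]
    exact this
  -- combine
  calc bs.N (f - bs.proj A f) ^ p
      ≤ bs.N (g - bs.proj (A \ B) g) ^ p + bs.N (bs.proj (B \ A) f) ^ p := by
        rw [hkey]; exact bs.N_padd _ _
  _ ≤ C ^ p * bs.N g ^ p + M / (1 - 2 ^ (-p)) := add_le_add step1 step2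
  _ = (C ^ p + 2 ^ p * C ^ p * (2 * C ^ p) / (1 - 2 ^ (-p))) * bs.N g ^ p := by
      rw [hMdef]; field_simp

end PBasis

/-- (Theorem 1.7, i) ⟺ iii).) A basis of a `p`-Banach space is almost greedy
iff there is `C > 0` with `‖f − P_A(f)‖ ≤ C‖f − a·𝟙_{ε,B}‖` for all `f`, greedy sets `A`,
sets `B` with `|B| ≤ |A|` and `A ∩ B = ∅`, signs `ε` on `B`, and scalars `a`. -/
theorem almost_greedy_iff_disjoint_polynomials {𝕜 : Type*} [RCLike 𝕜] {X : Type*}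
    [AddCommGroup X] [Module 𝕜 X] {p : ℝ} (hp : 0 < p) (hp1 : p ≤ 1) (bs : PBasis 𝕜 X p) :
    (∃ C : ℝ, 0 < C ∧ bs.IsAlmostGreedyWith C) ↔
      (∃ C : ℝ, 0 < C ∧ ∀ (f : X) (A B : Finset ℕ) (ε : ℕ → 𝕜) (a : 𝕜),
        bs.IsGreedySet f A → B.card ≤ A.card → Disjoint A B → PBasis.IsSign ε B →
        bs.N (f - bs.proj A f) ≤ C * bs.N (f - a • bs.indSign ε B)) := by
  constructor
  · rintro ⟨C, hC, hAG⟩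
    set Kp : ℝ := C ^ p * C ^ p * (1 + 2 ^ p * 2 ^ p * 2 * C ^ p) with hKpdef
    have hq : (0:ℝ) < C ^ p := Real.rpow_pos_of_pos hC p
    have h2p : (0:ℝ) < 2 ^ p := Real.rpow_pos_of_pos (by norm_num) p
    have hKp : 0 < Kp := by positivity
    refine ⟨Kp ^ (1/p), Real.rpow_pos_of_pos hKp _, ?_⟩
    intro f A B ε a hA hBA hd hsign
    have hcore := bs.forward_core hp hC hAG f A B ε a hA hBA hd hsign
    apply PBasis.rpow_le_back hp (bs.N_nonneg _)
      (mul_nonneg (Real.rpow_nonneg hKp.le _) (bs.N_nonneg _))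
    have hpow : (Kp ^ (1/p) * bs.N (f - a • bs.indSign ε B)) ^ p
        = Kp * bs.N (f - a • bs.indSign ε B) ^ p := by
      rw [Real.mul_rpow (Real.rpow_nonneg hKp.le _) (bs.N_nonneg _),
        ← Real.rpow_mul hKp.le, one_div_mul_cancel hp.ne', Real.rpow_one]
    rw [hpow]
    exact hcore
  · rintro ⟨C, hC, hR⟩
    have hG : bs.GoodC C := by
      intro v Γ D ε a hg hcard hdisj hsign _
      exact hR v Γ D ε a hg hcard hdisj hsign
    set Kb : ℝ := C ^ p + 2 ^ p * C ^ p * (2 * C ^ p) / (1 - 2 ^ (-p)) with hKbdef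
    have hq : (0:ℝ) < C ^ p := Real.rpow_pos_of_pos hC p
    have h2p : (0:ℝ) < 2 ^ p := Real.rpow_pos_of_pos (by norm_num) p
    have hr1 : (2:ℝ) ^ (-p) < 1 := by
      have : (2:ℝ) ^ (-p) < 2 ^ (0:ℝ) :=
        Real.rpow_lt_rpow_left_iff (by norm_num) |>.mpr (by linarith)
      simpa using this
    have h1r : (0:ℝ) < 1 - 2 ^ (-p) := by linarith
    have hKb : 0 < Kb := by positivity
    refine ⟨Kb ^ (1/p) + 1, by positivity, ?_⟩
    intro f A B hA hBA
    by_cases hAe : A.Nonempty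
    · have hcore := bs.backward_core hp hC hG f A B hA hBA hAe
      have hN : 0 ≤ bs.N (f - bs.proj B f) := bs.N_nonneg _
      have h1 : bs.N (f - bs.proj A f) ≤ Kb ^ (1/p) * bs.N (f - bs.proj B f) := by
        apply PBasis.rpow_le_back hp (bs.N_nonneg _)
          (mul_nonneg (Real.rpow_nonneg hKb.le _) hN)
        have hpow : (Kb ^ (1/p) * bs.N (f - bs.proj B f)) ^ p
            = Kb * bs.N (f - bs.proj B f) ^ p := by
          rw [Real.mul_rpow (Real.rpow_nonneg hKb.le _) hN,
            ← Real.rpow_mul hKb.le, one_div_mul_cancel hp.ne', Real.rpow_one]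
        rw [hpow]
        exact hcore
      have h2 : Kb ^ (1/p) * bs.N (f - bs.proj B f)
          ≤ (Kb ^ (1/p) + 1) * bs.N (f - bs.proj B f) := by nlinarith
      linarith
    · have hA0 : A = ∅ := Finset.not_nonempty_iff_eq_empty.mp hAe
      have hB0 : B = ∅ := by
        rw [← Finset.card_eq_zero]
        have := hA0 ▸ hBA
        simpa using this
      subst hA0; subst hB0
      have hN : 0 ≤ bs.N (f - bs.proj ∅ f) := bs.N_nonneg _
      have hKb' : 0 ≤ Kb ^ (1/p) := Real.rpow_nonneg hKb.le _
      nlinarith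
end
end

section
/- Let 0 < p ≤ 1, let X be a p-Banach space over 𝔽 = ℝ or ℂ, and let 𝒳 be a basis of X. Then 𝒳 is almost greedy if and only if there is C > 0 such that ‖f − P_A(f)‖ ≤ C·‖f − (min_{n∈A}|x_n^*(f)|)·𝟙_B‖ for all f ∈ X, all greedy sets A of f, and all B ⊂ ℕ with |B| = |A| and either A < B or B < A. -/
open scoped BigOperators

noncomputable section

namespace PBasisAux

open PBasis Finset

set_option linter.unusedSectionVars false

variable {𝕜 : Type*} [RCLike 𝕜] {X : Type*} [AddCommGroup X] [Module 𝕜 X] {p : ℝ}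

/-! ### Real power helpers -/

lemma le_of_forall_pos_le_add' {a b : ℝ} (h : ∀ ε : ℝ, 0 < ε → a ≤ b + ε) : a ≤ b := by
  by_contra hc
  push_neg at hc
  have := h ((a - b) / 2) (by linarith)
  linarith

section Basic

variable (hp : 0 < p) (hp1 : p ≤ 1) (bs : PBasis 𝕜 X p)

lemma N_zero : bs.N 0 = 0 := (bs.N_eq_zero_iff 0).2 rfl

lemma N_neg (f : X) : bs.N (-f) = bs.N f := by
  have := bs.N_smul (-1 : 𝕜) f
  simpa using this

/-- `Q f = N f ^ p`. -/
def Q (f : X) : ℝ := bs.N f ^ p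

include hp

lemma Q_nonneg (f : X) : 0 ≤ Q bs f :=
  Real.rpow_nonneg (bs.N_nonneg f) p

lemma Q_zero : Q bs (0 : X) = 0 := by
  simp [Q, N_zero bs, Real.zero_rpow (ne_of_gt hp)]

lemma Q_add_le (f g : X) : Q bs (f + g) ≤ Q bs f + Q bs g := bs.N_padd f g

lemma Q_neg (f : X) : Q bs (-f) = Q bs f := by simp [Q, N_neg]

lemma Q_sub_le (f g : X) : Q bs (f - g) ≤ Q bs f + Q bs g := by
  have := Q_add_le hp bs f (-g)
  rw [Q_neg hp bs] at this
  simpa [sub_eq_add_neg] using this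

lemma Q_smul (t : 𝕜) (f : X) : Q bs (t • f) = ‖t‖ ^ p * Q bs f := by
  simp [Q, bs.N_smul, Real.mul_rpow (norm_nonneg t) (bs.N_nonneg f)]

/-- reverse triangle: `Q a ≤ Q (a + b) + Q b`. -/
lemma Q_rev (a b : X) : Q bs a ≤ Q bs (a + b) + Q bs b := by
  have := Q_sub_le hp bs (a + b) b
  simpa using this

lemma Q_rev' (a b : X) : Q bs a ≤ Q bs (a - b) + Q bs b := by
  have := Q_add_le hp bs (a - b) b
  simpa using this

lemma Q_sum_le {ι : Type*} (s : Finset ι) (v : ι → X) :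
    Q bs (∑ i ∈ s, v i) ≤ ∑ i ∈ s, Q bs (v i) := by
  classical
  induction s using Finset.induction with
  | empty => simp [Q_zero hp bs]
  | @insert a s ha ih =>
    rw [Finset.sum_insert ha, Finset.sum_insert ha]
    exact le_trans (Q_add_le hp bs _ _) (by linarith)

/-- bridge : `N x ≤ C * N y ↔ Q x ≤ C^p * Q y` for `0 ≤ C`. -/
lemma N_le_iff_Q_le {C : ℝ} (hC : 0 ≤ C) (x y : X) :
    bs.N x ≤ C * bs.N y ↔ Q bs x ≤ C ^ p * Q bs y := by
  rw [Q, Q, ← Real.mul_rpow hC (bs.N_nonneg y)]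
  exact (Real.rpow_le_rpow_iff (bs.N_nonneg x) (mul_nonneg hC (bs.N_nonneg y)) hp).symm

lemma Q_le_of_N_le {x y : X} (h : bs.N x ≤ bs.N y) : Q bs x ≤ Q bs y :=
  Real.rpow_le_rpow (bs.N_nonneg x) h (le_of_lt hp)

end Basic

end PBasisAux
namespace PBasisAux

open PBasis Finset

variable {𝕜 : Type*} [RCLike 𝕜] {X : Type*} [AddCommGroup X] [Module 𝕜 X] {p : ℝ}

section CoordAPI

variable (bs : PBasis 𝕜 X p)

lemma coord_ind (n : ℕ) (B : Finset ℕ) :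
    bs.coord n (bs.ind B) = if n ∈ B then 1 else 0 := by
  classical
  rw [PBasis.ind, map_sum]
  simp_rw [bs.biorth]
  rw [Finset.sum_ite_eq B n (fun _ => (1 : 𝕜))]

lemma coord_proj (n : ℕ) (A : Finset ℕ) (f : X) :
    bs.coord n (bs.proj A f) = if n ∈ A then bs.coord n f else 0 := by
  classical
  rw [PBasis.proj, map_sum]
  have : ∀ j ∈ A, bs.coord n (bs.coord j f • bs.e j)
      = (if n = j then bs.coord j f else 0) := by
    intro j _
    rw [map_smul, bs.biorth n j, smul_eq_mul]
    split_ifs <;> simp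
  rw [Finset.sum_congr rfl this, Finset.sum_ite_eq A n (fun j => bs.coord j f)]

lemma proj_congr {A : Finset ℕ} {f g : X}
    (h : ∀ n ∈ A, bs.coord n f = bs.coord n g) : bs.proj A f = bs.proj A g := by
  unfold PBasis.proj
  exact Finset.sum_congr rfl fun n hn => by rw [h n hn]

lemma proj_add (A : Finset ℕ) (f g : X) :
    bs.proj A (f + g) = bs.proj A f + bs.proj A g := by
  unfold PBasis.proj
  rw [← Finset.sum_add_distrib]
  exact Finset.sum_congr rfl fun n _ => by rw [map_add, add_smul]

lemma proj_neg (A : Finset ℕ) (f : X) : bs.proj A (-f) = -bs.proj A f := by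
  unfold PBasis.proj
  rw [← Finset.sum_neg_distrib]
  exact Finset.sum_congr rfl fun n _ => by rw [map_neg, neg_smul]

lemma proj_sub (A : Finset ℕ) (f g : X) :
    bs.proj A (f - g) = bs.proj A f - bs.proj A g := by
  rw [sub_eq_add_neg, proj_add, proj_neg, sub_eq_add_neg]

lemma proj_smul (A : Finset ℕ) (t : 𝕜) (f : X) :
    bs.proj A (t • f) = t • bs.proj A f := by
  unfold PBasis.proj
  rw [Finset.smul_sum]
  exact Finset.sum_congr rfl fun n _ => by rw [map_smul, smul_eq_mul, smul_smul]

lemma proj_empty (f : X) : bs.proj ∅ f = 0 := by simp [PBasis.proj]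

lemma ind_empty : bs.ind ∅ = 0 := by simp [PBasis.ind]

lemma proj_proj (T W : Finset ℕ) (f : X) :
    bs.proj T (bs.proj W f) = bs.proj (T ∩ W) f := by
  classical
  unfold PBasis.proj
  rw [← Finset.sum_filter_add_sum_filter_not T (fun n => n ∈ W)]
  have h1 : ∀ n ∈ T.filter (fun n => n ∈ W),
      bs.coord n (∑ m ∈ W, bs.coord m f • bs.e m) • bs.e n = bs.coord n f • bs.e n := by
    intro n hn
    rw [Finset.mem_filter] at hn
    rw [show (∑ m ∈ W, bs.coord m f • bs.e m) = bs.proj W f from rfl, coord_proj,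
      if_pos hn.2]
  have h2 : ∀ n ∈ T.filter (fun n => ¬ n ∈ W),
      bs.coord n (∑ m ∈ W, bs.coord m f • bs.e m) • bs.e n = 0 := by
    intro n hn
    rw [Finset.mem_filter] at hn
    rw [show (∑ m ∈ W, bs.coord m f • bs.e m) = bs.proj W f from rfl, coord_proj,
      if_neg hn.2, zero_smul]
  rw [Finset.sum_congr rfl h1, Finset.sum_congr rfl h2, Finset.sum_const_zero, add_zero]
  apply Finset.sum_congr _ (fun _ _ => rfl)
  ext n; simp [Finset.mem_filter, Finset.mem_inter]

lemma proj_ind (T W : Finset ℕ) :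
    bs.proj T (bs.ind W) = bs.ind (T ∩ W) := by
  classical
  unfold PBasis.proj PBasis.ind
  rw [← Finset.sum_filter_add_sum_filter_not T (fun n => n ∈ W)]
  have h1 : ∀ n ∈ T.filter (fun n => n ∈ W),
      bs.coord n (∑ m ∈ W, bs.e m) • bs.e n = bs.e n := by
    intro n hn
    rw [Finset.mem_filter] at hn
    rw [show (∑ m ∈ W, bs.e m) = bs.ind W from rfl, coord_ind, if_pos hn.2, one_smul]
  have h2 : ∀ n ∈ T.filter (fun n => ¬ n ∈ W),
      bs.coord n (∑ m ∈ W, bs.e m) • bs.e n = 0 := by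
    intro n hn
    rw [Finset.mem_filter] at hn
    rw [show (∑ m ∈ W, bs.e m) = bs.ind W from rfl, coord_ind, if_neg hn.2, zero_smul]
  rw [Finset.sum_congr rfl h1, Finset.sum_congr rfl h2, Finset.sum_const_zero, add_zero]
  apply Finset.sum_congr _ (fun _ _ => rfl)
  ext n; simp [Finset.mem_filter, Finset.mem_inter]

lemma proj_union {A B : Finset ℕ} (h : Disjoint A B) (f : X) :
    bs.proj (A ∪ B) f = bs.proj A f + bs.proj B f := by
  unfold PBasis.proj
  exact Finset.sum_union h

lemma ind_union {A B : Finset ℕ} (h : Disjoint A B) :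
    bs.ind (A ∪ B) = bs.ind A + bs.ind B := by
  unfold PBasis.ind
  exact Finset.sum_union h

lemma ind_sdiff_of_subset {G E : Finset ℕ} (h : G ⊆ E) :
    bs.ind E - bs.ind (E \ G) = bs.ind G := by
  have : bs.ind (E \ G) + bs.ind G = bs.ind E := by
    unfold PBasis.ind
    exact Finset.sum_sdiff h
  linear_combination (norm := abel) this.symm

end CoordAPI

section MinCoef

variable (bs : PBasis 𝕜 X p)

lemma minCoef_nonneg (f : X) (A : Finset ℕ) : 0 ≤ bs.minCoef f A := by
  rcases A.eq_empty_or_nonempty with rfl | ⟨n, hn⟩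
  · simp [PBasis.minCoef, Real.sInf_empty]
  · apply le_csInf ⟨_, Set.mem_image_of_mem _ (by exact hn)⟩
    rintro y ⟨m, hm, rfl⟩
    exact norm_nonneg _

lemma minCoef_le {f : X} {A : Finset ℕ} {n : ℕ} (hn : n ∈ A) :
    bs.minCoef f A ≤ ‖bs.coord n f‖ := by
  apply csInf_le
  · exact ⟨0, by rintro y ⟨m, hm, rfl⟩; exact norm_nonneg _⟩
  · exact Set.mem_image_of_mem _ (by exact hn)

lemma le_minCoef {f : X} {A : Finset ℕ} (hA : A.Nonempty) {c : ℝ}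
    (h : ∀ n ∈ A, c ≤ ‖bs.coord n f‖) : c ≤ bs.minCoef f A := by
  apply le_csInf ⟨_, Set.mem_image_of_mem _ (by exact hA.choose_spec)⟩
  rintro y ⟨m, hm, rfl⟩
  exact h m hm

lemma minCoef_eq {f : X} {A : Finset ℕ} {θ : ℝ}
    (h1 : ∀ n ∈ A, θ ≤ ‖bs.coord n f‖) (h3 : ∃ n ∈ A, ‖bs.coord n f‖ = θ) :
    bs.minCoef f A = θ := by
  obtain ⟨n₀, hn₀, hv⟩ := h3
  refine le_antisymm ?_ (le_minCoef bs ⟨n₀, hn₀⟩ h1)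
  rw [← hv]
  exact minCoef_le bs hn₀

/-- coords outside a greedy set are at most the `minCoef`. -/
lemma greedy_out_le {f : X} {A : Finset ℕ} (hA : bs.IsGreedySet f A)
    (hne : A.Nonempty) {m : ℕ} (hm : m ∉ A) : ‖bs.coord m f‖ ≤ bs.minCoef f A := by
  apply le_csInf ⟨_, Set.mem_image_of_mem _ (by exact hne.choose_spec)⟩
  rintro y ⟨n, hn, rfl⟩
  exact hA n hn m hm

/-- finite nonempty set attains minCoef. -/
lemma minCoef_mem {f : X} {A : Finset ℕ} (hne : A.Nonempty) :
    ∃ n ∈ A, ‖bs.coord n f‖ = bs.minCoef f A := by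
  obtain ⟨n, hn, hmin⟩ := A.exists_min_image (fun n => ‖bs.coord n f‖) hne
  exact ⟨n, hn, le_antisymm (le_minCoef bs hne hmin) (minCoef_le bs hn)⟩

end MinCoef

end PBasisAux
namespace PBasisAux

open PBasis Finset

variable {𝕜 : Type*} [RCLike 𝕜] {X : Type*} [AddCommGroup X] [Module 𝕜 X] {p : ℝ}

/-! ### blocks -/

/-- the block `{M, M+1, ..., M+s-1}`. -/
def blk (M s : ℕ) : Finset ℕ := (Finset.range s).image (fun i => M + i)

lemma mem_blk {M s n : ℕ} : n ∈ blk M s ↔ M ≤ n ∧ n < M + s := by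
  simp only [blk, Finset.mem_image, Finset.mem_range]
  constructor
  · rintro ⟨i, hi, rfl⟩; omega
  · rintro ⟨h1, h2⟩; exact ⟨n - M, by omega, by omega⟩

lemma blk_card (M s : ℕ) : (blk M s).card = s := by
  rw [blk, Finset.card_image_of_injective _ (fun a b h => by omega)]
  exact Finset.card_range s

lemma blk_lower {M s n : ℕ} (h : n ∈ blk M s) : M ≤ n := (mem_blk.1 h).1

lemma blk_upper {M s n : ℕ} (h : n ∈ blk M s) : n < M + s := (mem_blk.1 h).2

lemma finsetBefore_blk {A : Finset ℕ} {M s : ℕ} (h : ∀ a ∈ A, a < M) :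
    FinsetBefore A (blk M s) :=
  fun a ha b hb => lt_of_lt_of_le (h a ha) (blk_lower hb)

lemma blk_disjoint_of_le {M s M' s' : ℕ} (h : M + s ≤ M') :
    Disjoint (blk M s) (blk M' s') := by
  rw [Finset.disjoint_left]
  intro n hn hn'
  have := blk_upper hn; have := blk_lower hn'; omega

lemma disjoint_of_finsetBefore {A B : Finset ℕ} (h : FinsetBefore A B) :
    Disjoint A B := by
  rw [Finset.disjoint_left]
  intro n hn hn'
  exact absurd (h n hn n hn') (lt_irrefl n)

lemma finsetBefore_of_bounds {A B : Finset ℕ} {M : ℕ}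
    (hA : ∀ a ∈ A, a < M) (hB : ∀ b ∈ B, M ≤ b) : FinsetBefore A B :=
  fun a ha b hb => lt_of_lt_of_le (hA a ha) (hB b hb)

/-! ### eventually small coordinates -/

section Small

variable (hp : 0 < p) (hp1 : p ≤ 1) (bs : PBasis 𝕜 X p)

/-- the coordinates of any vector are eventually (strictly) smaller than any `ε > 0`. -/
lemma coord_eventually_small (g : X) {ε : ℝ} (hε : 0 < ε) :
    ∃ N₀ : ℕ, ∀ n : ℕ, N₀ ≤ n → ‖bs.coord n g‖ < ε := by
  classical
  obtain ⟨c, hc⟩ := bs.coord_bdd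
  have hc0 : 0 ≤ max c 0 := le_max_right _ _
  set c' : ℝ := max c 0 + 1 with hc'
  have hc'pos : 0 < c' := by positivity
  obtain ⟨h, hmem, hclose⟩ := bs.dense_span g (ε / c') (by positivity)
  rw [Finsupp.mem_span_range_iff_exists_finsupp] at hmem
  obtain ⟨cf, rfl⟩ := hmem
  set S := cf.support
  refine ⟨(S.sup id) + 1, fun n hn => ?_⟩
  have hnS : n ∉ S := by
    intro hns
    have := Finset.le_sup (f := id) hns
    simp only [id] at this
    omega
  have hzero : bs.coord n (cf.sum fun i a => a • bs.e i) = 0 := by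
    rw [map_finsuppSum, Finsupp.sum]
    apply Finset.sum_eq_zero
    intro i hi
    rw [map_smul, bs.biorth n i, smul_eq_mul]
    have : n ≠ i := fun h => hnS (h ▸ hi)
    rw [if_neg this, mul_zero]
  have : bs.coord n g = bs.coord n (g - cf.sum fun i a => a • bs.e i) := by
    rw [map_sub, hzero, sub_zero]
  rw [this]
  calc ‖bs.coord n (g - cf.sum fun i a => a • bs.e i)‖
      ≤ c * bs.N (g - cf.sum fun i a => a • bs.e i) := hc _ _
    _ ≤ c' * bs.N (g - cf.sum fun i a => a • bs.e i) := by
        apply mul_le_mul_of_nonneg_right _ (bs.N_nonneg _)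
        rw [hc']; have := le_max_left c 0; linarith
    _ < c' * (ε / c') := by
        apply mul_lt_mul_of_pos_left hclose hc'pos
    _ = ε := by field_simp

/-- a positive constant dominating `N (e n)`. -/
lemma e_bound : ∃ ce : ℝ, 0 < ce ∧ ∀ n, bs.N (bs.e n) ≤ ce := by
  obtain ⟨c, hc⟩ := bs.e_bdd
  refine ⟨c + 1, ?_, fun n => by linarith [hc n]⟩
  linarith [bs.N_nonneg (bs.e 0), hc 0]

include hp

/-- `Q` of a projection onto a set where coordinates are `≤ ε`. -/
lemma Q_proj_small {g : X} {G : Finset ℕ} {ε ce : ℝ} (hce : 0 < ce)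
    (he : ∀ n, bs.N (bs.e n) ≤ ce) (hsmall : ∀ n ∈ G, ‖bs.coord n g‖ ≤ ε)
    (hε : 0 ≤ ε) :
    Q bs (bs.proj G g) ≤ G.card * (ε ^ p * ce ^ p) := by
  unfold PBasis.proj
  calc Q bs (∑ n ∈ G, bs.coord n g • bs.e n)
      ≤ ∑ n ∈ G, Q bs (bs.coord n g • bs.e n) := Q_sum_le hp bs _ _
    _ ≤ ∑ n ∈ G, ε ^ p * ce ^ p := by
        apply Finset.sum_le_sum
        intro n hn
        rw [Q_smul hp]
        apply mul_le_mul
        · exact Real.rpow_le_rpow (norm_nonneg _) (hsmall n hn) hp.le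
        · exact Real.rpow_le_rpow (bs.N_nonneg _) (he n) hp.le
        · exact Q_nonneg hp bs _
        · positivity
    _ = G.card * (ε ^ p * ce ^ p) := by rw [Finset.sum_const, nsmul_eq_mul]

end Small

end PBasisAux
namespace PBasisAux

open PBasis Finset

set_option linter.unusedSectionVars false

variable {𝕜 : Type*} [RCLike 𝕜] {X : Type*} [AddCommGroup X] [Module 𝕜 X] {p : ℝ}

section Bin

variable (hp : 0 < p) (hp1 : p ≤ 1) (bs : PBasis 𝕜 X p)

/-- the constant in the binary-expansion lemma. -/
noncomputable def binC (p : ℝ) : ℝ := ((1:ℝ)/2) ^ p / (1 - ((1:ℝ)/2) ^ p)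

lemma half_rpow_lt_one (hp : 0 < p) : ((1:ℝ)/2) ^ p < 1 :=
  Real.rpow_lt_one (by norm_num) (by norm_num) hp

lemma binC_nonneg (hp : 0 < p) : 0 ≤ binC p := by
  have h1 := half_rpow_lt_one hp
  have h2 : (0:ℝ) ≤ ((1:ℝ)/2) ^ p := Real.rpow_nonneg (by norm_num) p
  unfold binC
  exact div_nonneg h2 (by linarith)

include hp

/-- **Binary expansion lemma**, real coefficients in `[0,1]`. -/
lemma bin_real (E : Finset ℕ) (x : ℕ → X) (R : ℝ)
    (hR : ∀ G ⊆ E, Q bs (∑ i ∈ G, x i) ≤ R) (t : ℕ → ℝ)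
    (ht : ∀ i ∈ E, 0 ≤ t i ∧ t i ≤ 1) :
    Q bs (∑ i ∈ E, ((t i : ℝ) : 𝕜) • x i) ≤ binC p * R := by
  classical
  have hR0 : 0 ≤ R := by
    have h := hR ∅ (Finset.empty_subset E)
    rw [Finset.sum_empty, Q_zero hp bs] at h
    exact h
  set S' : Set ℝ := {q : ℝ | ∃ s : ℕ → ℝ, (∀ i ∈ E, 0 ≤ s i ∧ s i ≤ 1) ∧
      q = Q bs (∑ i ∈ E, ((s i : ℝ) : 𝕜) • x i)} with hS'
  have hne : S'.Nonempty := ⟨_, t, ht, rfl⟩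
  have hbdd : BddAbove S' := by
    refine ⟨E.card * R, ?_⟩
    rintro q ⟨s, hs, rfl⟩
    calc Q bs (∑ i ∈ E, ((s i : ℝ) : 𝕜) • x i)
        ≤ ∑ i ∈ E, Q bs (((s i : ℝ) : 𝕜) • x i) := Q_sum_le hp bs _ _
      _ ≤ ∑ i ∈ E, R := by
          apply Finset.sum_le_sum
          intro i hi
          rw [Q_smul hp, RCLike.norm_ofReal, abs_of_nonneg (hs i hi).1]
          have h1 : s i ^ p ≤ 1 := Real.rpow_le_one (hs i hi).1 (hs i hi).2 hp.le
          have h2 : Q bs (x i) ≤ R := by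
            have := hR {i} (by simpa using hi)
            simpa using this
          calc s i ^ p * Q bs (x i) ≤ 1 * Q bs (x i) :=
                mul_le_mul_of_nonneg_right h1 (Q_nonneg hp bs _)
            _ ≤ R := by rw [one_mul]; exact h2
      _ = E.card * R := by rw [Finset.sum_const, nsmul_eq_mul]
  set M := sSup S' with hM
  have hhalf : (0:ℝ) ≤ ((1:ℝ)/2) ^ p := Real.rpow_nonneg (by norm_num) p
  -- the key self-improvement estimate
  have key : ∀ q ∈ S', q ≤ ((1:ℝ)/2) ^ p * R + ((1:ℝ)/2) ^ p * M := by
    rintro q ⟨s, hs, rfl⟩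
    set G := E.filter (fun i => (1:ℝ)/2 ≤ s i) with hG
    set s' : ℕ → ℝ := fun i => if (1:ℝ)/2 ≤ s i then s i - 1/2 else s i with hs'
    have hterm : ∀ i : ℕ, ((s i : ℝ) : 𝕜) • x i
        = (if (1:ℝ)/2 ≤ s i then (((1:ℝ)/2 : ℝ) : 𝕜) • x i else 0)
          + (((1:ℝ)/2 : ℝ) : 𝕜) • (((2 * s' i : ℝ) : 𝕜) • x i) := by
      intro i
      by_cases h : (1:ℝ)/2 ≤ s i
      · rw [if_pos h]
        simp only [hs']
        rw [if_pos h, smul_smul, ← RCLike.ofReal_mul, ← add_smul, ← RCLike.ofReal_add]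
        norm_num
      · rw [if_neg h, zero_add]
        simp only [hs']
        rw [if_neg h, smul_smul, ← RCLike.ofReal_mul]
        norm_num
    have hdecomp : (∑ i ∈ E, ((s i : ℝ) : 𝕜) • x i)
        = (((1:ℝ)/2 : ℝ) : 𝕜) • (∑ i ∈ G, x i)
          + (((1:ℝ)/2 : ℝ) : 𝕜) • (∑ i ∈ E, ((2 * s' i : ℝ) : 𝕜) • x i) := by
      calc (∑ i ∈ E, ((s i : ℝ) : 𝕜) • x i)
          = ∑ i ∈ E, ((if (1:ℝ)/2 ≤ s i then (((1:ℝ)/2 : ℝ) : 𝕜) • x i else 0)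
              + (((1:ℝ)/2 : ℝ) : 𝕜) • (((2 * s' i : ℝ) : 𝕜) • x i)) :=
            Finset.sum_congr rfl (fun i _ => hterm i)
        _ = (∑ i ∈ G, (((1:ℝ)/2 : ℝ) : 𝕜) • x i)
            + ∑ i ∈ E, (((1:ℝ)/2 : ℝ) : 𝕜) • (((2 * s' i : ℝ) : 𝕜) • x i) := by
            rw [Finset.sum_add_distrib, hG, Finset.sum_filter]
        _ = _ := by rw [Finset.smul_sum, Finset.smul_sum]
    have hs2 : ∀ i ∈ E, 0 ≤ 2 * s' i ∧ 2 * s' i ≤ 1 := by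
      intro i hi
      simp only [hs']
      split_ifs with h
      · constructor <;> [linarith; linarith [(hs i hi).2]]
      · push_neg at h
        constructor <;> [linarith [(hs i hi).1]; linarith]
    have hmem2 : Q bs (∑ i ∈ E, ((2 * s' i : ℝ) : 𝕜) • x i) ≤ M :=
      le_csSup hbdd ⟨_, hs2, rfl⟩
    calc Q bs (∑ i ∈ E, ((s i : ℝ) : 𝕜) • x i)
        ≤ Q bs ((((1:ℝ)/2 : ℝ) : 𝕜) • (∑ i ∈ G, x i))
          + Q bs ((((1:ℝ)/2 : ℝ) : 𝕜) • (∑ i ∈ E, ((2 * s' i : ℝ) : 𝕜) • x i)) := by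
          rw [hdecomp]; exact Q_add_le hp bs _ _
      _ ≤ ((1:ℝ)/2) ^ p * R + ((1:ℝ)/2) ^ p * M := by
          rw [Q_smul hp, Q_smul hp, RCLike.norm_ofReal, abs_of_nonneg (by norm_num : (0:ℝ) ≤ 1/2)]
          have hGE : G ⊆ E := Finset.filter_subset _ _
          exact add_le_add (mul_le_mul_of_nonneg_left (hR G hGE) hhalf)
            (mul_le_mul_of_nonneg_left hmem2 hhalf)
  have hM_le : M ≤ ((1:ℝ)/2) ^ p * R + ((1:ℝ)/2) ^ p * M := csSup_le hne key
  have h1 : ((1:ℝ)/2) ^ p < 1 := half_rpow_lt_one hp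
  have hMb : M ≤ binC p * R := by
    unfold binC
    rw [div_mul_eq_mul_div, le_div_iff₀ (by linarith)]
    ring_nf
    ring_nf at hM_le
    nlinarith
  exact le_trans (le_csSup hbdd ⟨t, ht, rfl⟩) hMb

lemma norm_I_le_one : ‖(RCLike.I : 𝕜)‖ ≤ 1 := by
  rcases RCLike.I_mul_I_ax (K := 𝕜) with h | h
  · rw [h, norm_zero]; norm_num
  · have : ‖(RCLike.I : 𝕜)‖ * ‖(RCLike.I : 𝕜)‖ = 1 := by
      rw [← norm_mul, h, norm_neg, norm_one]
    nlinarith [norm_nonneg (RCLike.I : 𝕜)]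

/-- **Binary expansion lemma**, scalar coefficients of modulus ≤ 1. -/
lemma bin_kk (E : Finset ℕ) (x : ℕ → X) (R : ℝ)
    (hR : ∀ G ⊆ E, Q bs (∑ i ∈ G, x i) ≤ R) (c : ℕ → 𝕜)
    (hc : ∀ i ∈ E, ‖c i‖ ≤ 1) :
    Q bs (∑ i ∈ E, c i • x i) ≤ 4 * binC p * R := by
  classical
  set re : ℕ → ℝ := fun i => RCLike.re (c i) with hre
  set im : ℕ → ℝ := fun i => RCLike.im (c i) with him
  have hsplit : (∑ i ∈ E, c i • x i)
      = (∑ i ∈ E, ((re i : ℝ) : 𝕜) • x i)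
        + (RCLike.I : 𝕜) • (∑ i ∈ E, ((im i : ℝ) : 𝕜) • x i) := by
    rw [Finset.smul_sum, ← Finset.sum_add_distrib]
    apply Finset.sum_congr rfl
    intro i _
    rw [smul_smul]
    rw [← add_smul]
    congr 1
    rw [mul_comm]
    exact (RCLike.re_add_im (c i)).symm
  -- real part split into positive and negative parts
  have habs : ∀ (u : ℕ → ℝ), (∀ i ∈ E, |u i| ≤ 1) →
      Q bs (∑ i ∈ E, ((u i : ℝ) : 𝕜) • x i) ≤ 2 * binC p * R := by
    intro u hu
    set up : ℕ → ℝ := fun i => max (u i) 0 with hup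
    set un : ℕ → ℝ := fun i => max (-u i) 0 with hun
    have hdec : (∑ i ∈ E, ((u i : ℝ) : 𝕜) • x i)
        = (∑ i ∈ E, ((up i : ℝ) : 𝕜) • x i) - (∑ i ∈ E, ((un i : ℝ) : 𝕜) • x i) := by
      rw [← Finset.sum_sub_distrib]
      apply Finset.sum_congr rfl
      intro i _
      rw [← sub_smul, ← RCLike.ofReal_sub]
      congr 2
      simp only [hup, hun]
      rcases le_total (u i) 0 with h | h
      · rw [max_eq_right h, max_eq_left (by linarith)]; ring
      · rw [max_eq_left h, max_eq_right (by linarith)]; ring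
    have h1 : Q bs (∑ i ∈ E, ((up i : ℝ) : 𝕜) • x i) ≤ binC p * R := by
      apply bin_real hp bs E x R hR
      intro i hi
      have := abs_le.1 (hu i hi)
      constructor
      · exact le_max_right _ _
      · simp only [hup, max_le_iff]; exact ⟨this.2, by norm_num⟩
    have h2 : Q bs (∑ i ∈ E, ((un i : ℝ) : 𝕜) • x i) ≤ binC p * R := by
      apply bin_real hp bs E x R hR
      intro i hi
      have := abs_le.1 (hu i hi)
      constructor
      · exact le_max_right _ _
      · simp only [hun, max_le_iff]; exact ⟨by linarith [this.1], by norm_num⟩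
    calc Q bs (∑ i ∈ E, ((u i : ℝ) : 𝕜) • x i)
        ≤ Q bs (∑ i ∈ E, ((up i : ℝ) : 𝕜) • x i)
          + Q bs (∑ i ∈ E, ((un i : ℝ) : 𝕜) • x i) := by
          rw [hdec]; exact Q_sub_le hp bs _ _
      _ ≤ 2 * binC p * R := by linarith
  have hre1 : ∀ i ∈ E, |re i| ≤ 1 := fun i hi =>
    le_trans (RCLike.abs_re_le_norm (c i)) (hc i hi)
  have him1 : ∀ i ∈ E, |im i| ≤ 1 := fun i hi =>
    le_trans (RCLike.abs_im_le_norm (c i)) (hc i hi)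
  have hI : Q bs ((RCLike.I : 𝕜) • (∑ i ∈ E, ((im i : ℝ) : 𝕜) • x i))
      ≤ Q bs (∑ i ∈ E, ((im i : ℝ) : 𝕜) • x i) := by
    rw [Q_smul hp]
    have : ‖(RCLike.I : 𝕜)‖ ^ p ≤ 1 :=
      Real.rpow_le_one (norm_nonneg _) (norm_I_le_one hp) hp.le
    calc ‖(RCLike.I : 𝕜)‖ ^ p * Q bs (∑ i ∈ E, ((im i : ℝ) : 𝕜) • x i)
        ≤ 1 * Q bs (∑ i ∈ E, ((im i : ℝ) : 𝕜) • x i) :=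
          mul_le_mul_of_nonneg_right this (Q_nonneg hp bs _)
      _ = _ := one_mul _
  calc Q bs (∑ i ∈ E, c i • x i)
      ≤ Q bs (∑ i ∈ E, ((re i : ℝ) : 𝕜) • x i)
        + Q bs ((RCLike.I : 𝕜) • (∑ i ∈ E, ((im i : ℝ) : 𝕜) • x i)) := by
        rw [hsplit]; exact Q_add_le hp bs _ _
    _ ≤ 2 * binC p * R + 2 * binC p * R :=
        add_le_add (habs re hre1) (le_trans hI (habs im him1))
    _ = 4 * binC p * R := by ring
end Bin

end PBasisAux
namespace PBasisAux

open PBasis Finset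

set_option linter.unusedSectionVars false
set_option maxHeartbeats 1000000

variable {𝕜 : Type*} [RCLike 𝕜] {X : Type*} [AddCommGroup X] [Module 𝕜 X] {p : ℝ}

/-- the hypothesis of the right-hand side of the main theorem. -/
def Vcond (bs : PBasis 𝕜 X p) (C : ℝ) : Prop :=
  ∀ (f : X) (A B : Finset ℕ),
    bs.IsGreedySet f A → B.card = A.card →
    (FinsetBefore A B ∨ FinsetBefore B A) →
    bs.N (f - bs.proj A f) ≤ C * bs.N (f - ((bs.minCoef f A : ℝ) : 𝕜) • bs.ind B)

section Master

variable (hp : 0 < p) (hp1 : p ≤ 1) (bs : PBasis 𝕜 X p) {C : ℝ}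

lemma norm_ofReal_nonneg {a : ℝ} (ha : 0 ≤ a) : ‖((a : ℝ) : 𝕜)‖ = a := by
  rw [RCLike.norm_ofReal, abs_of_nonneg ha]

include hp

/-- master application of the `Vcond` hypothesis. -/
lemma master_v (hC : 0 ≤ C) (hv : Vcond bs C) (u : X) (T S : Finset ℕ) (θ : ℝ)
    (h1 : ∀ n ∈ T, θ ≤ ‖bs.coord n u‖) (h2 : ∀ m, m ∉ T → ‖bs.coord m u‖ ≤ θ)
    (h3 : ∃ n ∈ T, ‖bs.coord n u‖ = θ) (hcard : S.card = T.card)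
    (hbef : FinsetBefore T S ∨ FinsetBefore S T) :
    Q bs (u - bs.proj T u) ≤ C ^ p * Q bs (u - ((θ : ℝ) : 𝕜) • bs.ind S) := by
  have hg : bs.IsGreedySet u T := fun n hn m hm => le_trans (h2 m hm) (h1 n hn)
  have hmc : bs.minCoef u T = θ := minCoef_eq bs h1 h3
  have h := hv u T S hg hcard hbef
  rw [hmc] at h
  exact (N_le_iff_Q_le hp bs hC _ _).1 h

omit hp in
/-- `proj` of a set where all coordinates vanish. -/
lemma proj_eq_zero {f : X} {S : Finset ℕ} (h : ∀ n ∈ S, bs.coord n f = 0) :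
    bs.proj S f = 0 := by
  unfold PBasis.proj
  exact Finset.sum_eq_zero fun n hn => by rw [h n hn, zero_smul]

/-- separated democracy from the `Vcond` hypothesis. -/
lemma sep_dem_v (hC : 0 ≤ C) (hv : Vcond bs C) {G B : Finset ℕ}
    (hcard : B.card = G.card) (hbef : FinsetBefore G B) :
    Q bs (bs.ind G) ≤ C ^ p * Q bs (bs.ind B) := by
  classical
  rcases G.eq_empty_or_nonempty with rfl | hGne
  · have : B = ∅ := Finset.card_eq_zero.1 (by simpa using hcard)
    subst this
    rw [ind_empty, Q_zero hp bs]
    positivity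
  have hdisj : Disjoint G B := disjoint_of_finsetBefore hbef
  set u : X := bs.ind (G ∪ B) with hu
  have hcoord : ∀ n, bs.coord n u = if n ∈ G ∪ B then 1 else 0 := fun n => coord_ind bs n _
  have hBne : B.Nonempty := by
    rw [← Finset.card_pos, hcard, Finset.card_pos]; exact hGne
  have h1 : ∀ n ∈ B, (1:ℝ) ≤ ‖bs.coord n u‖ := by
    intro n hn
    rw [hcoord, if_pos (Finset.mem_union_right _ hn), norm_one]
  have h2 : ∀ m, m ∉ B → ‖bs.coord m u‖ ≤ 1 := by
    intro m _
    rw [hcoord]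
    split_ifs <;> simp
  have h3 : ∃ n ∈ B, ‖bs.coord n u‖ = 1 := by
    obtain ⟨n, hn⟩ := hBne
    exact ⟨n, hn, by rw [hcoord, if_pos (Finset.mem_union_right _ hn), norm_one]⟩
  have key := master_v hp bs hC hv u B G 1 h1 h2 h3 hcard.symm (Or.inr hbef)
  have e1 : u - bs.proj B u = bs.ind G := by
    rw [hu, proj_ind]
    have : B ∩ (G ∪ B) = B := by
      ext x; simp only [Finset.mem_inter, Finset.mem_union]; tauto
    rw [this, ind_union bs hdisj]
    abel
  have e2 : u - ((1 : ℝ) : 𝕜) • bs.ind G = bs.ind B := by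
    rw [hu, ind_union bs hdisj]
    norm_num
  rwa [e1, e2] at key

/-- suppression-unconditionality for indicators, from a quasi-greediness bound. -/
lemma succ_generic {K : ℝ}
    (hqg : ∀ (g : X) (A₀ : Finset ℕ), bs.IsGreedySet g A₀ →
      Q bs (g - bs.proj A₀ g) ≤ K * Q bs g)
    {G E : Finset ℕ} (hGE : G ⊆ E) :
    Q bs (bs.ind G) ≤ K * Q bs (bs.ind E) := by
  classical
  have hgreedy : bs.IsGreedySet (bs.ind E) (E \ G) := by
    intro n hn m _
    rw [coord_ind, coord_ind, if_pos (Finset.mem_sdiff.1 hn).1, norm_one]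
    split_ifs <;> simp
  have := hqg (bs.ind E) (E \ G) hgreedy
  rwa [proj_ind, Finset.inter_eq_left.2 (Finset.sdiff_subset),
    ind_sdiff_of_subset bs hGE] at this

end Master

end PBasisAux
namespace PBasisAux

open PBasis Finset

set_option linter.unusedSectionVars false
set_option maxHeartbeats 1000000

variable {𝕜 : Type*} [RCLike 𝕜] {X : Type*} [AddCommGroup X] [Module 𝕜 X] {p : ℝ}

section Steps

variable (hp : 0 < p) (bs : PBasis 𝕜 X p) {C : ℝ}

include hp

/-- Step A : `Q (r + α'·𝟙_B) ≤ C^p Q (g - P_B g) + Q (P_B g)` for far blocks `B`. -/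
lemma stepA (hC : 0 ≤ C) (hv : Vcond bs C) {g : X} {A₀ B : Finset ℕ}
    (hA : bs.IsGreedySet g A₀) (hne : A₀.Nonempty)
    (hcard : B.card = A₀.card) (hbef : FinsetBefore A₀ B) :
    Q bs ((g - bs.proj A₀ g) + ((bs.minCoef g A₀ : ℝ) : 𝕜) • bs.ind B)
      ≤ C ^ p * Q bs (g - bs.proj B g) + Q bs (bs.proj B g) := by
  classical
  set α' := bs.minCoef g A₀ with hα'
  have hα0 : 0 ≤ α' := minCoef_nonneg bs g A₀
  set sα : 𝕜 := ((α' : ℝ) : 𝕜) with hsα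
  have hnsα : ‖sα‖ = α' := norm_ofReal_nonneg hα0
  have hd : Disjoint A₀ B := disjoint_of_finsetBefore hbef
  have hint : A₀ ∩ B = ∅ := by rwa [← Finset.disjoint_iff_inter_eq_empty]
  set u : X := (g - bs.proj B g) + sα • bs.ind B with hu
  have hcu : ∀ n, bs.coord n u = if n ∈ B then sα else bs.coord n g := by
    intro n
    rw [hu, map_add, map_sub, coord_proj, map_smul, coord_ind, smul_eq_mul]
    split_ifs with h
    · ring
    · ring
  have h1 : ∀ n ∈ A₀, α' ≤ ‖bs.coord n u‖ := by
    intro n hn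
    rw [hcu, if_neg (Finset.disjoint_left.1 hd hn)]
    exact minCoef_le bs hn
  have h2 : ∀ m, m ∉ A₀ → ‖bs.coord m u‖ ≤ α' := by
    intro m hm
    rw [hcu]
    split_ifs with h
    · rw [hnsα]
    · exact greedy_out_le bs hA hne hm
  have h3 : ∃ n ∈ A₀, ‖bs.coord n u‖ = α' := by
    obtain ⟨n₀, hn₀, hv0⟩ := minCoef_mem bs (f := g) hne
    exact ⟨n₀, hn₀, by rw [hcu, if_neg (Finset.disjoint_left.1 hd hn₀)]; exact hv0⟩
  have key := master_v hp bs hC hv u A₀ B α' h1 h2 h3 hcard (Or.inl hbef)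
  have eproj : bs.proj A₀ u = bs.proj A₀ g := by
    rw [hu, proj_add, proj_sub, proj_proj, proj_smul, proj_ind, hint, proj_empty,
      ind_empty, smul_zero, add_zero, sub_zero]
  have e2 : u - sα • bs.ind B = g - bs.proj B g := by rw [hu]; abel
  rw [e2] at key
  have eid : (g - bs.proj A₀ g) + sα • bs.ind B = (u - bs.proj A₀ u) + bs.proj B g := by
    rw [eproj, hu]; abel
  calc Q bs ((g - bs.proj A₀ g) + sα • bs.ind B)
      ≤ Q bs (u - bs.proj A₀ u) + Q bs (bs.proj B g) := by
        rw [eid]; exact Q_add_le hp bs _ _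
    _ ≤ C ^ p * Q bs (g - bs.proj B g) + Q bs (bs.proj B g) := by linarith

/-- Step C : indicator blocks of doubled size are dominated by differences of blocks. -/
lemma stepC (hC : 0 ≤ C) (hv : Vcond bs C) {g : X} {A₀ B B' S : Finset ℕ}
    (hBne : B.Nonempty)
    (hd12 : Disjoint B B') (hdS1 : Disjoint S B) (hdS2 : Disjoint S B')
    (hcard : S.card = (B ∪ B').card)
    (hbef : FinsetBefore (B ∪ B') S ∨ FinsetBefore S (B ∪ B')) :
    Q bs (((bs.minCoef g A₀ : ℝ) : 𝕜) • bs.ind S)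
      ≤ C ^ p * Q bs (((bs.minCoef g A₀ : ℝ) : 𝕜) • bs.ind B
          - ((bs.minCoef g A₀ : ℝ) : 𝕜) • bs.ind B') := by
  classical
  set α' := bs.minCoef g A₀ with hα'
  have hα0 : 0 ≤ α' := minCoef_nonneg bs g A₀
  set sα : 𝕜 := ((α' : ℝ) : 𝕜) with hsα
  have hnsα : ‖sα‖ = α' := norm_ofReal_nonneg hα0
  set T := B ∪ B' with hT
  set u : X := sα • bs.ind B - sα • bs.ind B' + sα • bs.ind S with hu
  have hcu : ∀ n, bs.coord n u = (if n ∈ B then sα else 0) - (if n ∈ B' then sα else 0)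
      + (if n ∈ S then sα else 0) := by
    intro n
    simp only [hu, map_add, map_sub, map_smul, coord_ind, smul_eq_mul, mul_ite, mul_one,
      mul_zero]
  have h1 : ∀ n ∈ T, α' ≤ ‖bs.coord n u‖ := by
    intro n hn
    rcases Finset.mem_union.1 hn with h | h
    · rw [hcu, if_pos h, if_neg (Finset.disjoint_left.1 hd12 h),
        if_neg (fun hs => Finset.disjoint_left.1 hdS1 hs h)]
      simp [hnsα]
    · rw [hcu, if_neg (Finset.disjoint_right.1 hd12 h), if_pos h,
        if_neg (fun hs => Finset.disjoint_left.1 hdS2 hs h)]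
      simp [hnsα]
  have h2 : ∀ m, m ∉ T → ‖bs.coord m u‖ ≤ α' := by
    intro m hm
    rw [hT, Finset.mem_union] at hm
    push_neg at hm
    rw [hcu, if_neg hm.1, if_neg hm.2]
    split_ifs with h
    · simp [hnsα]
    · simp [hα0]
  have h3 : ∃ n ∈ T, ‖bs.coord n u‖ = α' := by
    obtain ⟨n, hn⟩ := hBne
    refine ⟨n, Finset.mem_union_left _ hn, ?_⟩
    rw [hcu, if_pos hn, if_neg (Finset.disjoint_left.1 hd12 hn),
      if_neg (fun hs => Finset.disjoint_left.1 hdS1 hs hn)]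
    simp [hnsα]
  have key := master_v hp bs hC hv u T S α' h1 h2 h3 hcard hbef
  have hTB : T ∩ B = B := Finset.inter_eq_right.2 Finset.subset_union_left
  have hTB' : T ∩ B' = B' := Finset.inter_eq_right.2 Finset.subset_union_right
  have hTS : T ∩ S = ∅ := by
    rw [← Finset.disjoint_iff_inter_eq_empty]
    exact Finset.disjoint_union_left.2 ⟨hdS1.symm, hdS2.symm⟩
  have eproj : bs.proj T u = sα • bs.ind B - sα • bs.ind B' := by
    rw [hu, proj_add, proj_sub, proj_smul, proj_smul, proj_smul, proj_ind, proj_ind,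
      proj_ind, hTB, hTB', hTS, ind_empty, smul_zero, add_zero]
  have e1 : u - bs.proj T u = sα • bs.ind S := by rw [eproj, hu]; abel
  have e2 : u - sα • bs.ind S = sα • bs.ind B - sα • bs.ind B' := by rw [hu]; abel
  rwa [e1, e2] at key


/-- Step D : triple-size blocks dominated by `2 P_{A₀} g - α'(𝟙_B + 𝟙_{B'})`. -/
lemma stepD (hC : 0 ≤ C) (hv : Vcond bs C) {g : X} {A₀ B B' S : Finset ℕ}
    (hA : bs.IsGreedySet g A₀) (hne : A₀.Nonempty) (hBne : B.Nonempty)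
    (hdA1 : Disjoint A₀ B) (hdA2 : Disjoint A₀ B') (hd12 : Disjoint B B')
    (hdSA : Disjoint S A₀) (hdS1 : Disjoint S B) (hdS2 : Disjoint S B')
    (hcard : S.card = (A₀ ∪ B ∪ B').card)
    (hbef : FinsetBefore (A₀ ∪ B ∪ B') S ∨ FinsetBefore S (A₀ ∪ B ∪ B')) :
    Q bs (((bs.minCoef g A₀ : ℝ) : 𝕜) • bs.ind S)
      ≤ C ^ p * Q bs ((bs.proj A₀ g - ((bs.minCoef g A₀ : ℝ) : 𝕜) • bs.ind B)
          + (bs.proj A₀ g - ((bs.minCoef g A₀ : ℝ) : 𝕜) • bs.ind B')) := by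
  classical
  set α' := bs.minCoef g A₀ with hα'
  have hα0 : 0 ≤ α' := minCoef_nonneg bs g A₀
  set sα : 𝕜 := ((α' : ℝ) : 𝕜) with hsα
  have hnsα : ‖sα‖ = α' := norm_ofReal_nonneg hα0
  set T := A₀ ∪ B ∪ B' with hT
  set u : X := ((2 : ℝ) : 𝕜) • bs.proj A₀ g - sα • bs.ind B - sα • bs.ind B'
      + sα • bs.ind S with hu
  have hcu : ∀ n, bs.coord n u
      = ((2 : ℝ) : 𝕜) * (if n ∈ A₀ then bs.coord n g else 0)
        - (if n ∈ B then sα else 0) - (if n ∈ B' then sα else 0)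
        + (if n ∈ S then sα else 0) := by
    intro n
    simp only [hu, map_add, map_sub, map_smul, coord_ind, coord_proj, smul_eq_mul, mul_ite,
      mul_one, mul_zero]
  have hmemT : ∀ {n}, n ∈ A₀ → n ∈ T := fun h =>
    Finset.mem_union_left _ (Finset.mem_union_left _ h)
  have h1 : ∀ n ∈ T, α' ≤ ‖bs.coord n u‖ := by
    intro n hn
    rcases Finset.mem_union.1 hn with h | h
    · rcases Finset.mem_union.1 h with h' | h'
      · rw [hcu, if_pos h', if_neg (Finset.disjoint_left.1 hdA1 h'),
          if_neg (Finset.disjoint_left.1 hdA2 h'),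
          if_neg (fun hs => Finset.disjoint_left.1 hdSA hs h')]
        rw [sub_zero, sub_zero, add_zero, norm_mul, norm_ofReal_nonneg (by norm_num : (0:ℝ) ≤ 2)]
        have := minCoef_le bs (f := g) h'
        nlinarith [norm_nonneg (bs.coord n g)]
      · rw [hcu, if_neg (Finset.disjoint_right.1 hdA1 h'), if_pos h',
          if_neg (Finset.disjoint_left.1 hd12 h'),
          if_neg (fun hs => Finset.disjoint_left.1 hdS1 hs h')]
        simp [hnsα]
    · rw [hcu, if_neg (Finset.disjoint_right.1 hdA2 h),
        if_neg (Finset.disjoint_right.1 hd12 h), if_pos h,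
        if_neg (fun hs => Finset.disjoint_left.1 hdS2 hs h)]
      simp [hnsα]
  have h2 : ∀ m, m ∉ T → ‖bs.coord m u‖ ≤ α' := by
    intro m hm
    rw [hT] at hm
    simp only [Finset.mem_union, not_or] at hm
    rw [hcu, if_neg hm.1.1, if_neg hm.1.2, if_neg hm.2]
    split_ifs with h
    · simp [hnsα]
    · simp [hα0]
  have h3 : ∃ n ∈ T, ‖bs.coord n u‖ = α' := by
    obtain ⟨n, hn⟩ := hBne
    refine ⟨n, Finset.mem_union_left _ (Finset.mem_union_right _ hn), ?_⟩
    rw [hcu, if_neg (Finset.disjoint_right.1 hdA1 hn), if_pos hn,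
      if_neg (Finset.disjoint_left.1 hd12 hn),
      if_neg (fun hs => Finset.disjoint_left.1 hdS1 hs hn)]
    simp [hnsα]
  have key := master_v hp bs hC hv u T S α' h1 h2 h3 hcard hbef
  have hTA : T ∩ A₀ = A₀ :=
    Finset.inter_eq_right.2 (Finset.subset_union_left.trans Finset.subset_union_left)
  have hTB : T ∩ B = B := Finset.inter_eq_right.2
    (Finset.subset_union_right.trans Finset.subset_union_left)
  have hTB' : T ∩ B' = B' := Finset.inter_eq_right.2 Finset.subset_union_right
  have hTS : T ∩ S = ∅ := by
    rw [← Finset.disjoint_iff_inter_eq_empty]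
    exact Finset.disjoint_union_left.2
      ⟨Finset.disjoint_union_left.2 ⟨hdSA.symm, hdS1.symm⟩, hdS2.symm⟩
  have eproj : bs.proj T u
      = ((2 : ℝ) : 𝕜) • bs.proj A₀ g - sα • bs.ind B - sα • bs.ind B' := by
    rw [hu, proj_add, proj_sub, proj_sub, proj_smul, proj_smul, proj_smul, proj_smul,
      proj_proj, proj_ind, proj_ind, proj_ind, hTA, hTB, hTB', hTS, ind_empty, smul_zero,
      add_zero]
  have e1 : u - bs.proj T u = sα • bs.ind S := by rw [eproj, hu]; abel
  have e2 : u - sα • bs.ind S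
      = (bs.proj A₀ g - sα • bs.ind B) + (bs.proj A₀ g - sα • bs.ind B') := by
    rw [hu]
    have h2s : ((2 : ℝ) : 𝕜) • bs.proj A₀ g = bs.proj A₀ g + bs.proj A₀ g := by
      rw [RCLike.ofReal_ofNat, two_smul]
    rw [h2s]; abel
  rwa [e1, e2] at key

/-- Step E : `rsum` at blocks of size `|A₀| + |D|`. -/
lemma stepE (hC : 0 ≤ C) (hv : Vcond bs C) {g : X} {A₀ D S : Finset ℕ}
    (hA : bs.IsGreedySet g A₀) (hne : A₀.Nonempty)
    (hdAD : Disjoint A₀ D) (hdAS : Disjoint A₀ S) (hdDS : Disjoint D S)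
    (hcard : S.card = (A₀ ∪ D).card)
    (hbef : FinsetBefore (A₀ ∪ D) S ∨ FinsetBefore S (A₀ ∪ D)) :
    Q bs ((g - bs.proj A₀ g) + ((bs.minCoef g A₀ : ℝ) : 𝕜) • bs.ind S)
      ≤ C ^ p * Q bs ((g - bs.proj (D ∪ S) g) + ((bs.minCoef g A₀ : ℝ) : 𝕜) • bs.ind D)
        + Q bs (bs.proj (D ∪ S) g) := by
  classical
  set α' := bs.minCoef g A₀ with hα'
  have hα0 : 0 ≤ α' := minCoef_nonneg bs g A₀
  set sα : 𝕜 := ((α' : ℝ) : 𝕜) with hsα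
  have hnsα : ‖sα‖ = α' := norm_ofReal_nonneg hα0
  set Z := D ∪ S with hZ
  set T := A₀ ∪ D with hT
  set u : X := (g - bs.proj Z g) + sα • bs.ind D + sα • bs.ind S with hu
  have hcu : ∀ n, bs.coord n u
      = (bs.coord n g - (if n ∈ Z then bs.coord n g else 0))
        + (if n ∈ D then sα else 0) + (if n ∈ S then sα else 0) := by
    intro n
    simp only [hu, map_add, map_sub, map_smul, coord_ind, coord_proj, smul_eq_mul, mul_ite,
      mul_one, mul_zero]
  have hAZ : ∀ {n}, n ∈ A₀ → n ∉ Z := by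
    intro n hn hz
    rcases Finset.mem_union.1 hz with h | h
    · exact Finset.disjoint_left.1 hdAD hn h
    · exact Finset.disjoint_left.1 hdAS hn h
  have h1 : ∀ n ∈ T, α' ≤ ‖bs.coord n u‖ := by
    intro n hn
    rcases Finset.mem_union.1 hn with h | h
    · rw [hcu, if_neg (hAZ h), if_neg (Finset.disjoint_left.1 hdAD h),
        if_neg (fun hs => Finset.disjoint_left.1 hdAS h hs)]
      rw [sub_zero, add_zero, add_zero]
      exact minCoef_le bs h
    · rw [hcu, if_pos (Finset.mem_union_left _ h), if_pos h,
        if_neg (fun hs => Finset.disjoint_left.1 hdDS h hs)]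
      simp [hnsα]
  have h2 : ∀ m, m ∉ T → ‖bs.coord m u‖ ≤ α' := by
    intro m hm
    rw [hT] at hm
    simp only [Finset.mem_union, not_or] at hm
    by_cases hs : m ∈ S
    · rw [hcu, if_pos (Finset.mem_union_right _ hs), if_neg hm.2, if_pos hs]
      simp [hnsα]
    · have hz : m ∉ Z := by
        rw [hZ, Finset.mem_union]
        push_neg
        exact ⟨hm.2, hs⟩
      rw [hcu, if_neg hz, if_neg hm.2, if_neg hs, sub_zero, add_zero, add_zero]
      exact greedy_out_le bs hA hne hm.1
  have h3 : ∃ n ∈ T, ‖bs.coord n u‖ = α' := by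
    obtain ⟨n₀, hn₀, hv0⟩ := minCoef_mem bs (f := g) hne
    refine ⟨n₀, Finset.mem_union_left _ hn₀, ?_⟩
    rw [hcu, if_neg (hAZ hn₀), if_neg (Finset.disjoint_left.1 hdAD hn₀),
      if_neg (fun hs => Finset.disjoint_left.1 hdAS hn₀ hs)]
    rw [sub_zero, add_zero, add_zero]
    exact hv0
  have key := master_v hp bs hC hv u T S α' h1 h2 h3 hcard hbef
  have hAZint : A₀ ∩ Z = ∅ := by
    rw [← Finset.disjoint_iff_inter_eq_empty, Finset.disjoint_left]
    exact fun a ha => hAZ ha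
  have hAD : A₀ ∩ D = ∅ := by rwa [← Finset.disjoint_iff_inter_eq_empty]
  have hAS : A₀ ∩ S = ∅ := by rwa [← Finset.disjoint_iff_inter_eq_empty]
  have hDZ : D ∩ Z = D := Finset.inter_eq_left.2 Finset.subset_union_left
  have hDD : D ∩ D = D := Finset.inter_self D
  have hDS : D ∩ S = ∅ := by rwa [← Finset.disjoint_iff_inter_eq_empty]
  have eprojA : bs.proj A₀ u = bs.proj A₀ g := by
    rw [hu, proj_add, proj_add, proj_sub, proj_proj, proj_smul, proj_smul, proj_ind,
      proj_ind, hAZint, hAD, hAS, proj_empty, ind_empty]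
    simp
  have eprojD : bs.proj D u = sα • bs.ind D := by
    rw [hu, proj_add, proj_add, proj_sub, proj_proj, proj_smul, proj_smul, proj_ind,
      proj_ind, hDZ, hDD, hDS, ind_empty]
    simp
  have eproj : bs.proj T u = bs.proj A₀ g + sα • bs.ind D := by
    rw [hT, proj_union bs hdAD, eprojA, eprojD]
  have eid : (g - bs.proj A₀ g) + sα • bs.ind S = (u - bs.proj T u) + bs.proj Z g := by
    rw [eproj, hu]; abel
  have e2 : u - sα • bs.ind S = (g - bs.proj Z g) + sα • bs.ind D := by rw [hu]; abel
  rw [e2] at key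
  calc Q bs ((g - bs.proj A₀ g) + sα • bs.ind S)
      ≤ Q bs (u - bs.proj T u) + Q bs (bs.proj Z g) := by
        rw [eid]; exact Q_add_le hp bs _ _
    _ ≤ C ^ p * Q bs ((g - bs.proj Z g) + sα • bs.ind D) + Q bs (bs.proj Z g) := by
        linarith

/-- Step G : the final application bounding the residual itself. -/
lemma stepG (hC : 0 ≤ C) (hv : Vcond bs C) {g : X} {A₀ W B' : Finset ℕ}
    (hA : bs.IsGreedySet g A₀) (hne : A₀.Nonempty)
    (hdAW : Disjoint A₀ W) (hdAB : Disjoint A₀ B') (hdWB : Disjoint W B')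
    (hcard : B'.card = (A₀ ∪ W).card) (hbef : FinsetBefore (A₀ ∪ W) B') :
    Q bs (g - bs.proj A₀ g)
      ≤ C ^ p * Q bs ((g - bs.proj (W ∪ B') g)
          + (((bs.minCoef g A₀ : ℝ) : 𝕜) • bs.ind W
            - ((bs.minCoef g A₀ : ℝ) : 𝕜) • bs.ind B'))
        + Q bs (bs.proj (W ∪ B') g) := by
  classical
  set α' := bs.minCoef g A₀ with hα'
  have hα0 : 0 ≤ α' := minCoef_nonneg bs g A₀
  set sα : 𝕜 := ((α' : ℝ) : 𝕜) with hsα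
  have hnsα : ‖sα‖ = α' := norm_ofReal_nonneg hα0
  set Z := W ∪ B' with hZ
  set T := A₀ ∪ W with hT
  set u : X := (g - bs.proj Z g) + sα • bs.ind W with hu
  have hcu : ∀ n, bs.coord n u
      = (bs.coord n g - (if n ∈ Z then bs.coord n g else 0))
        + (if n ∈ W then sα else 0) := by
    intro n
    simp only [hu, map_add, map_sub, map_smul, coord_ind, coord_proj, smul_eq_mul, mul_ite,
      mul_one, mul_zero]
  have hAZ : ∀ {n}, n ∈ A₀ → n ∉ Z := by
    intro n hn hz
    rcases Finset.mem_union.1 hz with h | h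
    · exact Finset.disjoint_left.1 hdAW hn h
    · exact Finset.disjoint_left.1 hdAB hn h
  have h1 : ∀ n ∈ T, α' ≤ ‖bs.coord n u‖ := by
    intro n hn
    rcases Finset.mem_union.1 hn with h | h
    · rw [hcu, if_neg (hAZ h), if_neg (Finset.disjoint_left.1 hdAW h), sub_zero, add_zero]
      exact minCoef_le bs h
    · rw [hcu, if_pos (Finset.mem_union_left _ h), if_pos h]
      simp [hnsα]
  have h2 : ∀ m, m ∉ T → ‖bs.coord m u‖ ≤ α' := by
    intro m hm
    rw [hT] at hm
    simp only [Finset.mem_union, not_or] at hm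
    by_cases hb : m ∈ B'
    · rw [hcu, if_pos (Finset.mem_union_right _ hb), if_neg hm.2]
      simp [hα0]
    · have hz : m ∉ Z := by
        rw [hZ, Finset.mem_union]
        push_neg
        exact ⟨hm.2, hb⟩
      rw [hcu, if_neg hz, if_neg hm.2, sub_zero, add_zero]
      exact greedy_out_le bs hA hne hm.1
  have h3 : ∃ n ∈ T, ‖bs.coord n u‖ = α' := by
    obtain ⟨n₀, hn₀, hv0⟩ := minCoef_mem bs (f := g) hne
    refine ⟨n₀, Finset.mem_union_left _ hn₀, ?_⟩
    rw [hcu, if_neg (hAZ hn₀), if_neg (Finset.disjoint_left.1 hdAW hn₀), sub_zero, add_zero]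
    exact hv0
  have key := master_v hp bs hC hv u T B' α' h1 h2 h3 hcard (Or.inl hbef)
  have hAZint : A₀ ∩ Z = ∅ := by
    rw [← Finset.disjoint_iff_inter_eq_empty, Finset.disjoint_left]
    exact fun a ha => hAZ ha
  have hAW : A₀ ∩ W = ∅ := by rwa [← Finset.disjoint_iff_inter_eq_empty]
  have hWZ : W ∩ Z = W := Finset.inter_eq_left.2 Finset.subset_union_left
  have hWW : W ∩ W = W := Finset.inter_self W
  have eprojA : bs.proj A₀ u = bs.proj A₀ g := by
    rw [hu, proj_add, proj_sub, proj_proj, proj_smul, proj_ind, hAZint, hAW, proj_empty,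
      ind_empty]
    simp
  have eprojW : bs.proj W u = sα • bs.ind W := by
    rw [hu, proj_add, proj_sub, proj_proj, proj_smul, proj_ind, hWZ, hWW]
    simp
  have eproj : bs.proj T u = bs.proj A₀ g + sα • bs.ind W := by
    rw [hT, proj_union bs hdAW, eprojA, eprojW]
  have eid : (g - bs.proj A₀ g) = (u - bs.proj T u) + bs.proj Z g := by
    rw [eproj, hu]; abel
  have e2 : u - sα • bs.ind B'
      = (g - bs.proj Z g) + (sα • bs.ind W - sα • bs.ind B') := by rw [hu]; abel
  rw [e2] at key
  calc Q bs (g - bs.proj A₀ g)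
      ≤ Q bs (u - bs.proj T u) + Q bs (bs.proj Z g) := by
        rw [eid]; exact Q_add_le hp bs _ _
    _ ≤ _ := by linarith


end Steps

end PBasisAux
namespace PBasisAux

open PBasis Finset

set_option linter.unusedSectionVars false
set_option maxHeartbeats 2000000

variable {𝕜 : Type*} [RCLike 𝕜] {X : Type*} [AddCommGroup X] [Module 𝕜 X] {p : ℝ}

lemma lt_sup_succ {A : Finset ℕ} {a : ℕ} (h : a ∈ A) : a < A.sup id + 1 :=
  Nat.lt_succ_of_le (Finset.le_sup (f := id) h)

section QGfromV

variable (hp : 0 < p) (bs : PBasis 𝕜 X p) {C : ℝ}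

include hp

/-- choice of a smallness threshold `ε` so that all small-coordinate projections of `g`
on sets of size at most `K` have `Q`-value at most `δ'`. -/
lemma exists_eps (g : X) {δ' : ℝ} (hδ' : 0 < δ') (K : ℕ) :
    ∃ ε : ℝ, 0 < ε ∧ ∀ G : Finset ℕ, G.card ≤ K →
      (∀ n ∈ G, ‖bs.coord n g‖ ≤ ε) → Q bs (bs.proj G g) ≤ δ' := by
  obtain ⟨ce, hce, hceb⟩ := e_bound bs
  have hcep : (0:ℝ) < ce ^ p := Real.rpow_pos_of_pos hce p
  set base : ℝ := δ' / ((K + 1) * ce ^ p) with hbase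
  have hbasepos : 0 < base := by
    apply div_pos hδ'
    positivity
  refine ⟨base ^ (1/p), Real.rpow_pos_of_pos hbasepos _, ?_⟩
  intro G hGcard hGsmall
  have hepsp : (base ^ (1/p)) ^ p = base := by
    rw [← Real.rpow_mul hbasepos.le, one_div, inv_mul_cancel₀ (ne_of_gt hp),
      Real.rpow_one]
  have h1 := Q_proj_small hp bs hce hceb hGsmall
    (le_of_lt (Real.rpow_pos_of_pos hbasepos (1/p)))
  rw [hepsp] at h1
  refine le_trans h1 ?_
  rw [hbase]
  have hKG : (G.card : ℝ) ≤ K := by exact_mod_cast hGcard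
  have hK1 : (0:ℝ) < (K : ℝ) + 1 := by positivity
  have hGc0 : (0:ℝ) ≤ (G.card : ℝ) := by positivity
  calc (G.card : ℝ) * (δ' / (((K:ℝ) + 1) * ce ^ p) * ce ^ p)
      = (G.card : ℝ) * δ' / ((K:ℝ) + 1) := by field_simp
    _ ≤ δ' := by
        rw [div_le_iff₀ hK1]
        nlinarith [hδ'.le]

/-- **Quasi-greediness from the V-condition.** -/
theorem qg_of_v (hC1 : 1 ≤ C) (hv : Vcond bs C) (g : X) (A₀ : Finset ℕ)
    (hA : bs.IsGreedySet g A₀) :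
    Q bs (g - bs.proj A₀ g) ≤ 9 * (C ^ p) ^ 4 * Q bs g := by
  classical
  have hC0 : (0:ℝ) ≤ C := by linarith
  have hκ : 1 ≤ C ^ p := by
    rw [← Real.one_rpow p]
    exact Real.rpow_le_rpow (by norm_num) hC1 hp.le
  have hk0 : (0:ℝ) ≤ C ^ p := by linarith
  have hqg0 : 0 ≤ Q bs g := Q_nonneg hp bs g
  have hκ4one : 1 ≤ (C ^ p)^4 := one_le_pow₀ hκ
  have hκ13 : C ^ p ≤ (C ^ p)^3 := le_self_pow₀ hκ (by norm_num)
  have hκ14 : C ^ p ≤ (C ^ p)^4 := le_self_pow₀ hκ (by norm_num)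
  have hκ3one : 1 ≤ (C ^ p)^3 := one_le_pow₀ hκ
  rcases A₀.eq_empty_or_nonempty with rfl | hne
  · rw [proj_empty, sub_zero]
    nlinarith [hqg0, hκ4one]
  -- main case
  apply le_of_forall_pos_le_add'
  intro δ hδ
  have hκ4 : (0:ℝ) < 14 * (C ^ p)^4 := by nlinarith [hκ4one]
  set δ' := δ / (14 * (C ^ p)^4) with hδ'def
  have hδ' : 0 < δ' := div_pos hδ hκ4
  set k := A₀.card with hk
  have hk1 : 1 ≤ k := Finset.card_pos.2 hne
  obtain ⟨ε, hε, hεprop⟩ := exists_eps hp bs g hδ' (10 * k)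
  obtain ⟨N₁, hN₁⟩ := coord_eventually_small bs g hε
  set M := max N₁ (A₀.sup id + 1) with hM
  have hA₀M : ∀ a ∈ A₀, a < M := fun a ha =>
    lt_of_lt_of_le (lt_sup_succ ha) (le_max_right _ _)
  have hsmallM : ∀ n, M ≤ n → ‖bs.coord n g‖ ≤ ε := fun n hn =>
    le_of_lt (hN₁ n (le_trans (le_max_left _ _) hn))
  -- disjointness and order helpers
  have hdA : ∀ (M' s : ℕ), M ≤ M' → Disjoint A₀ (blk M' s) := by
    intro M' s hM'
    rw [Finset.disjoint_left]
    intro a ha hb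
    have h1 := blk_lower hb
    have h2 := hA₀M a ha
    omega
  have hbefA : ∀ (M' s : ℕ), M ≤ M' → FinsetBefore A₀ (blk M' s) := by
    intro M' s hM' a ha b hb
    have h1 := blk_lower hb
    have h2 := hA₀M a ha
    omega
  have hsmallblk : ∀ (M' s : ℕ), M ≤ M' → ∀ n ∈ blk M' s, ‖bs.coord n g‖ ≤ ε := by
    intro M' s hM' n hn
    exact hsmallM n (le_trans hM' (blk_lower hn))
  -- the six blocks
  set b1 := blk M k with hb1
  set b2 := blk (M + k) k with hb2
  set d3 := blk (M + 2*k) (2*k) with hd3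
  set w := blk (M + 4*k) (3*k) with hw
  set d4 := blk (M + 7*k) (3*k) with hd4
  set b' := blk (M + 10*k) (4*k) with hb'
  have hb1c : b1.card = k := blk_card _ _
  have hb2c : b2.card = k := blk_card _ _
  have hd3c : d3.card = 2*k := blk_card _ _
  have hwc : w.card = 3*k := blk_card _ _
  have hd4c : d4.card = 3*k := blk_card _ _
  have hb'c : b'.card = 4*k := blk_card _ _
  have hb1ne : b1.Nonempty := by rw [← Finset.card_pos, hb1c]; omega
  -- junk bounds
  have jb1 : Q bs (bs.proj b1 g) ≤ δ' :=
    hεprop b1 (by omega) (hsmallblk M k (le_refl M))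
  have jb2 : Q bs (bs.proj b2 g) ≤ δ' :=
    hεprop b2 (by omega) (hsmallblk (M + k) k (by omega))
  have j35 : Q bs (bs.proj (d3 ∪ w) g) ≤ δ' := by
    apply hεprop (d3 ∪ w)
    · calc (d3 ∪ w).card ≤ d3.card + w.card := Finset.card_union_le _ _
        _ ≤ 10 * k := by omega
    · intro n hn
      rcases Finset.mem_union.1 hn with h | h
      · exact hsmallblk (M + 2*k) (2*k) (by omega) n h
      · exact hsmallblk (M + 4*k) (3*k) (by omega) n h
  have j47 : Q bs (bs.proj (d4 ∪ b') g) ≤ δ' := by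
    apply hεprop (d4 ∪ b')
    · calc (d4 ∪ b').card ≤ d4.card + b'.card := Finset.card_union_le _ _
        _ ≤ 10 * k := by omega
    · intro n hn
      rcases Finset.mem_union.1 hn with h | h
      · exact hsmallblk (M + 7*k) (3*k) (by omega) n h
      · exact hsmallblk (M + 10*k) (4*k) (by omega) n h
  have jwb : Q bs (bs.proj (w ∪ b') g) ≤ δ' := by
    apply hεprop (w ∪ b')
    · calc (w ∪ b').card ≤ w.card + b'.card := Finset.card_union_le _ _
        _ ≤ 10 * k := by omega
    · intro n hn
      rcases Finset.mem_union.1 hn with h | h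
      · exact hsmallblk (M + 4*k) (3*k) (by omega) n h
      · exact hsmallblk (M + 10*k) (4*k) (by omega) n h
  -- step A at b1 and b2
  have bQA1 : Q bs ((g - bs.proj A₀ g) + ((bs.minCoef g A₀ : ℝ) : 𝕜) • bs.ind b1)
      ≤ C ^ p * Q bs g + 2 * C ^ p * δ' := by
    have h1 := stepA hp bs hC0 hv hA hne (by rw [hb1c] : b1.card = A₀.card)
      (hbefA M k (le_refl M))
    have h2 : Q bs (g - bs.proj b1 g) ≤ Q bs g + δ' := by
      have := Q_sub_le hp bs g (bs.proj b1 g)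
      linarith
    have h3 := mul_le_mul_of_nonneg_left h2 hk0
    nlinarith [hδ'.le, hκ]
  have bQA2 : Q bs ((g - bs.proj A₀ g) + ((bs.minCoef g A₀ : ℝ) : 𝕜) • bs.ind b2)
      ≤ C ^ p * Q bs g + 2 * C ^ p * δ' := by
    have h1 := stepA hp bs hC0 hv hA hne (by rw [hb2c] : b2.card = A₀.card)
      (hbefA (M + k) k (by omega))
    have h2 : Q bs (g - bs.proj b2 g) ≤ Q bs g + δ' := by
      have := Q_sub_le hp bs g (bs.proj b2 g)
      linarith
    have h3 := mul_le_mul_of_nonneg_left h2 hk0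
    nlinarith [hδ'.le, hκ]
  -- pair difference
  have bP12 : Q bs (((bs.minCoef g A₀ : ℝ) : 𝕜) • bs.ind b1
      - ((bs.minCoef g A₀ : ℝ) : 𝕜) • bs.ind b2)
      ≤ 2 * C ^ p * Q bs g + 4 * C ^ p * δ' := by
    have eid : ((bs.minCoef g A₀ : ℝ) : 𝕜) • bs.ind b1
        - ((bs.minCoef g A₀ : ℝ) : 𝕜) • bs.ind b2
        = ((g - bs.proj A₀ g) + ((bs.minCoef g A₀ : ℝ) : 𝕜) • bs.ind b1)
          - ((g - bs.proj A₀ g) + ((bs.minCoef g A₀ : ℝ) : 𝕜) • bs.ind b2) := by abel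
    rw [eid]
    have := Q_sub_le hp bs ((g - bs.proj A₀ g) + ((bs.minCoef g A₀ : ℝ) : 𝕜) • bs.ind b1)
      ((g - bs.proj A₀ g) + ((bs.minCoef g A₀ : ℝ) : 𝕜) • bs.ind b2)
    linarith
  -- M_{2k} : step C with S := d3
  have bQC : Q bs (((bs.minCoef g A₀ : ℝ) : 𝕜) • bs.ind d3)
      ≤ 2 * (C ^ p)^2 * Q bs g + 4 * (C ^ p)^2 * δ' := by
    have hd12 : Disjoint b1 b2 := blk_disjoint_of_le (by omega)
    have hd31 : Disjoint d3 b1 := (blk_disjoint_of_le (by omega : M + k ≤ M + 2*k)).symm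
    have hd32 : Disjoint d3 b2 := (blk_disjoint_of_le (by omega : M + k + k ≤ M + 2*k)).symm
    have hcardd3 : d3.card = (b1 ∪ b2).card := by
      rw [Finset.card_union_of_disjoint hd12, hd3c, hb1c, hb2c]
      omega
    have hbefd3 : FinsetBefore (b1 ∪ b2) d3 := by
      intro a ha b hb
      rcases Finset.mem_union.1 ha with h | h
      · have h1 := blk_upper h; have h2 := blk_lower hb; omega
      · have h1 := blk_upper h; have h2 := blk_lower hb; omega
    have h1 := stepC hp bs hC0 hv (g := g) (A₀ := A₀) hb1ne hd12 hd31 hd32 hcardd3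
      (Or.inl hbefd3)
    have h2 := mul_le_mul_of_nonneg_left bP12 hk0
    nlinarith [h1, h2]

  -- QB bounds
  have bQB1 : Q bs (bs.proj A₀ g - ((bs.minCoef g A₀ : ℝ) : 𝕜) • bs.ind b1)
      ≤ 2 * C ^ p * Q bs g + 2 * C ^ p * δ' := by
    have eid : bs.proj A₀ g - ((bs.minCoef g A₀ : ℝ) : 𝕜) • bs.ind b1
        = g - ((g - bs.proj A₀ g) + ((bs.minCoef g A₀ : ℝ) : 𝕜) • bs.ind b1) := by abel
    rw [eid]
    have := Q_sub_le hp bs g ((g - bs.proj A₀ g) + ((bs.minCoef g A₀ : ℝ) : 𝕜) • bs.ind b1)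
    nlinarith [bQA1, hκ, hqg0, hδ'.le]
  have bQB2 : Q bs (bs.proj A₀ g - ((bs.minCoef g A₀ : ℝ) : 𝕜) • bs.ind b2)
      ≤ 2 * C ^ p * Q bs g + 2 * C ^ p * δ' := by
    have eid : bs.proj A₀ g - ((bs.minCoef g A₀ : ℝ) : 𝕜) • bs.ind b2
        = g - ((g - bs.proj A₀ g) + ((bs.minCoef g A₀ : ℝ) : 𝕜) • bs.ind b2) := by abel
    rw [eid]
    have := Q_sub_le hp bs g ((g - bs.proj A₀ g) + ((bs.minCoef g A₀ : ℝ) : 𝕜) • bs.ind b2)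
    nlinarith [bQA2, hκ, hqg0, hδ'.le]
  -- M_{3k} : step D with S := d4
  have bQD : Q bs (((bs.minCoef g A₀ : ℝ) : 𝕜) • bs.ind d4)
      ≤ 4 * (C ^ p)^2 * Q bs g + 4 * (C ^ p)^2 * δ' := by
    have hdA1 : Disjoint A₀ b1 := hdA M k (le_refl M)
    have hdA2 : Disjoint A₀ b2 := hdA (M + k) k (by omega)
    have hd12 : Disjoint b1 b2 := blk_disjoint_of_le (by omega)
    have hdSA : Disjoint d4 A₀ := (hdA (M + 7*k) (3*k) (by omega)).symm
    have hdS1 : Disjoint d4 b1 := (blk_disjoint_of_le (by omega : M + k ≤ M + 7*k)).symm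
    have hdS2 : Disjoint d4 b2 :=
      (blk_disjoint_of_le (by omega : M + k + k ≤ M + 7*k)).symm
    have hcardd4 : d4.card = (A₀ ∪ b1 ∪ b2).card := by
      rw [Finset.card_union_of_disjoint, Finset.card_union_of_disjoint hdA1, hd4c, hb1c,
        hb2c]
      · omega
      · rw [Finset.disjoint_union_left]
        exact ⟨hdA2, hd12⟩
    have hbefd4 : FinsetBefore (A₀ ∪ b1 ∪ b2) d4 := by
      intro a ha b hb
      have hblow := blk_lower hb
      rcases Finset.mem_union.1 ha with h | h
      · rcases Finset.mem_union.1 h with h' | h'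
        · have := hA₀M a h'; omega
        · have := blk_upper h'; omega
      · have := blk_upper h; omega
    have h1 := stepD hp bs hC0 hv (g := g) hA hne hb1ne hdA1 hdA2 hd12 hdSA hdS1 hdS2
      hcardd4 (Or.inl hbefd4)
    have h2 : Q bs ((bs.proj A₀ g - ((bs.minCoef g A₀ : ℝ) : 𝕜) • bs.ind b1)
        + (bs.proj A₀ g - ((bs.minCoef g A₀ : ℝ) : 𝕜) • bs.ind b2))
        ≤ 4 * C ^ p * Q bs g + 4 * C ^ p * δ' := by
      have := Q_add_le hp bs (bs.proj A₀ g - ((bs.minCoef g A₀ : ℝ) : 𝕜) • bs.ind b1)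
        (bs.proj A₀ g - ((bs.minCoef g A₀ : ℝ) : 𝕜) • bs.ind b2)
      linarith
    have h3 := mul_le_mul_of_nonneg_left h2 hk0
    nlinarith [h1, h3]
  -- rsum at w : step E with D := d3, S := w
  have bQE : Q bs ((g - bs.proj A₀ g) + ((bs.minCoef g A₀ : ℝ) : 𝕜) • bs.ind w)
      ≤ 3 * (C ^ p)^3 * Q bs g + 6 * (C ^ p)^3 * δ' := by
    have hdAD : Disjoint A₀ d3 := hdA (M + 2*k) (2*k) (by omega)
    have hdAS : Disjoint A₀ w := hdA (M + 4*k) (3*k) (by omega)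
    have hdDS : Disjoint d3 w := blk_disjoint_of_le (by omega)
    have hcardw : w.card = (A₀ ∪ d3).card := by
      rw [Finset.card_union_of_disjoint hdAD, hwc, hd3c]
      omega
    have hbefw : FinsetBefore (A₀ ∪ d3) w := by
      intro a ha b hb
      have hblow := blk_lower hb
      rcases Finset.mem_union.1 ha with h | h
      · have := hA₀M a h; omega
      · have := blk_upper h; omega
    have h1 := stepE hp bs hC0 hv (g := g) hA hne hdAD hdAS hdDS hcardw (Or.inl hbefw)
    have h2 : Q bs ((g - bs.proj (d3 ∪ w) g) + ((bs.minCoef g A₀ : ℝ) : 𝕜) • bs.ind d3)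
        ≤ Q bs g + δ' + (2 * (C ^ p)^2 * Q bs g + 4 * (C ^ p)^2 * δ') := by
      have ha := Q_add_le hp bs (g - bs.proj (d3 ∪ w) g)
        (((bs.minCoef g A₀ : ℝ) : 𝕜) • bs.ind d3)
      have hb := Q_sub_le hp bs g (bs.proj (d3 ∪ w) g)
      linarith [bQC, j35]
    have h3 := mul_le_mul_of_nonneg_left h2 hk0
    nlinarith [h1, h3, j35, mul_le_mul_of_nonneg_right hκ13 hqg0,
      mul_le_mul_of_nonneg_right hκ13 hδ'.le, mul_le_mul_of_nonneg_right hκ3one hδ'.le]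
  -- rsum at b' : step E with D := d4, S := b'
  have bQF : Q bs ((g - bs.proj A₀ g) + ((bs.minCoef g A₀ : ℝ) : 𝕜) • bs.ind b')
      ≤ 5 * (C ^ p)^3 * Q bs g + 6 * (C ^ p)^3 * δ' := by
    have hdAD : Disjoint A₀ d4 := hdA (M + 7*k) (3*k) (by omega)
    have hdAS : Disjoint A₀ b' := hdA (M + 10*k) (4*k) (by omega)
    have hdDS : Disjoint d4 b' := blk_disjoint_of_le (by omega)
    have hcardb' : b'.card = (A₀ ∪ d4).card := by
      rw [Finset.card_union_of_disjoint hdAD, hb'c, hd4c]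
      omega
    have hbefb' : FinsetBefore (A₀ ∪ d4) b' := by
      intro a ha b hb
      have hblow := blk_lower hb
      rcases Finset.mem_union.1 ha with h | h
      · have := hA₀M a h; omega
      · have := blk_upper h; omega
    have h1 := stepE hp bs hC0 hv (g := g) hA hne hdAD hdAS hdDS hcardb' (Or.inl hbefb')
    have h2 : Q bs ((g - bs.proj (d4 ∪ b') g) + ((bs.minCoef g A₀ : ℝ) : 𝕜) • bs.ind d4)
        ≤ Q bs g + δ' + (4 * (C ^ p)^2 * Q bs g + 4 * (C ^ p)^2 * δ') := by
      have ha := Q_add_le hp bs (g - bs.proj (d4 ∪ b') g)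
        (((bs.minCoef g A₀ : ℝ) : 𝕜) • bs.ind d4)
      have hb := Q_sub_le hp bs g (bs.proj (d4 ∪ b') g)
      linarith [bQD, j47]
    have h3 := mul_le_mul_of_nonneg_left h2 hk0
    nlinarith [h1, h3, j47, mul_le_mul_of_nonneg_right hκ13 hqg0,
      mul_le_mul_of_nonneg_right hκ13 hδ'.le, mul_le_mul_of_nonneg_right hκ3one hδ'.le]
  -- final : step G
  have bpair : Q bs (((bs.minCoef g A₀ : ℝ) : 𝕜) • bs.ind w
      - ((bs.minCoef g A₀ : ℝ) : 𝕜) • bs.ind b')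
      ≤ 8 * (C ^ p)^3 * Q bs g + 12 * (C ^ p)^3 * δ' := by
    have eid : ((bs.minCoef g A₀ : ℝ) : 𝕜) • bs.ind w
        - ((bs.minCoef g A₀ : ℝ) : 𝕜) • bs.ind b'
        = ((g - bs.proj A₀ g) + ((bs.minCoef g A₀ : ℝ) : 𝕜) • bs.ind w)
          - ((g - bs.proj A₀ g) + ((bs.minCoef g A₀ : ℝ) : 𝕜) • bs.ind b') := by abel
    rw [eid]
    have := Q_sub_le hp bs ((g - bs.proj A₀ g) + ((bs.minCoef g A₀ : ℝ) : 𝕜) • bs.ind w)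
      ((g - bs.proj A₀ g) + ((bs.minCoef g A₀ : ℝ) : 𝕜) • bs.ind b')
    linarith [bQE, bQF]
  have bfinal : Q bs (g - bs.proj A₀ g) ≤ 9 * (C ^ p)^4 * Q bs g + 14 * (C ^ p)^4 * δ' := by
    have hdAW : Disjoint A₀ w := hdA (M + 4*k) (3*k) (by omega)
    have hdAB : Disjoint A₀ b' := hdA (M + 10*k) (4*k) (by omega)
    have hdWB : Disjoint w b' := blk_disjoint_of_le (by omega)
    have hcardg : b'.card = (A₀ ∪ w).card := by
      rw [Finset.card_union_of_disjoint hdAW, hb'c, hwc]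
      omega
    have hbefg : FinsetBefore (A₀ ∪ w) b' := by
      intro a ha b hb
      have hblow := blk_lower hb
      rcases Finset.mem_union.1 ha with h | h
      · have := hA₀M a h; omega
      · have := blk_upper h; omega
    have h1 := stepG hp bs hC0 hv (g := g) hA hne hdAW hdAB hdWB hcardg hbefg
    have h2 : Q bs ((g - bs.proj (w ∪ b') g)
        + (((bs.minCoef g A₀ : ℝ) : 𝕜) • bs.ind w
          - ((bs.minCoef g A₀ : ℝ) : 𝕜) • bs.ind b'))
        ≤ Q bs g + δ' + (8 * (C ^ p)^3 * Q bs g + 12 * (C ^ p)^3 * δ') := by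
      have ha := Q_add_le hp bs (g - bs.proj (w ∪ b') g)
        (((bs.minCoef g A₀ : ℝ) : 𝕜) • bs.ind w - ((bs.minCoef g A₀ : ℝ) : 𝕜) • bs.ind b')
      have hb := Q_sub_le hp bs g (bs.proj (w ∪ b') g)
      linarith [bpair, jwb]
    have h3 := mul_le_mul_of_nonneg_left h2 hk0
    nlinarith [h1, h3, jwb, mul_le_mul_of_nonneg_right hκ14 hqg0,
      mul_le_mul_of_nonneg_right hκ14 hδ'.le, mul_le_mul_of_nonneg_right hκ4one hδ'.le]
  have hδ'mul : 14 * (C ^ p)^4 * δ' = δ := by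
    rw [hδ'def]
    field_simp
  linarith [bfinal, hδ'mul.le, hδ'mul.ge]

/-- **The 2k-block truncation bound from the V-condition** : for any set `S` of twice the
cardinality of the greedy set, `Q(α'·𝟙_S) ≤ 2 C^{2p} Q g`. -/
theorem m2k_of_v (hC1 : 1 ≤ C) (hv : Vcond bs C) (g : X) (A₀ : Finset ℕ)
    (hA : bs.IsGreedySet g A₀) (hne : A₀.Nonempty) (S : Finset ℕ)
    (hS : S.card = 2 * A₀.card) :
    Q bs (((bs.minCoef g A₀ : ℝ) : 𝕜) • bs.ind S) ≤ 2 * (C ^ p)^2 * Q bs g := by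
  classical
  have hC0 : (0:ℝ) ≤ C := by linarith
  have hκ : 1 ≤ C ^ p := by
    rw [← Real.one_rpow p]
    exact Real.rpow_le_rpow (by norm_num) hC1 hp.le
  have hk0 : (0:ℝ) ≤ C ^ p := by linarith
  have hqg0 : 0 ≤ Q bs g := Q_nonneg hp bs g
  have hκ2one : 1 ≤ (C ^ p)^2 := one_le_pow₀ hκ
  apply le_of_forall_pos_le_add'
  intro δ hδ
  have hκ2 : (0:ℝ) < 4 * (C ^ p)^2 := by nlinarith
  set δ' := δ / (4 * (C ^ p)^2) with hδ'def
  have hδ' : 0 < δ' := div_pos hδ hκ2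
  set k := A₀.card with hk
  have hk1 : 1 ≤ k := Finset.card_pos.2 hne
  obtain ⟨ε, hε, hεprop⟩ := exists_eps hp bs g hδ' (10 * k)
  obtain ⟨N₁, hN₁⟩ := coord_eventually_small bs g hε
  set M := max N₁ (max (A₀.sup id + 1) (S.sup id + 1)) with hM
  have hA₀M : ∀ a ∈ A₀, a < M := fun a ha =>
    lt_of_lt_of_le (lt_sup_succ ha) (le_trans (le_max_left _ _) (le_max_right _ _))
  have hSM : ∀ a ∈ S, a < M := fun a ha =>
    lt_of_lt_of_le (lt_sup_succ ha) (le_trans (le_max_right _ _) (le_max_right _ _))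
  have hsmallM : ∀ n, M ≤ n → ‖bs.coord n g‖ ≤ ε := fun n hn =>
    le_of_lt (hN₁ n (le_trans (le_max_left _ _) hn))
  have hbefA : ∀ (M' s : ℕ), M ≤ M' → FinsetBefore A₀ (blk M' s) := by
    intro M' s hM' a ha b hb
    have h1 := blk_lower hb
    have h2 := hA₀M a ha
    omega
  have hsmallblk : ∀ (M' s : ℕ), M ≤ M' → ∀ n ∈ blk M' s, ‖bs.coord n g‖ ≤ ε := by
    intro M' s hM' n hn
    exact hsmallM n (le_trans hM' (blk_lower hn))
  set b1 := blk M k with hb1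
  set b2 := blk (M + k) k with hb2
  have hb1c : b1.card = k := blk_card _ _
  have hb2c : b2.card = k := blk_card _ _
  have hb1ne : b1.Nonempty := by rw [← Finset.card_pos, hb1c]; omega
  have jb1 : Q bs (bs.proj b1 g) ≤ δ' :=
    hεprop b1 (by omega) (hsmallblk M k (le_refl M))
  have jb2 : Q bs (bs.proj b2 g) ≤ δ' :=
    hεprop b2 (by omega) (hsmallblk (M + k) k (by omega))
  have bQA1 : Q bs ((g - bs.proj A₀ g) + ((bs.minCoef g A₀ : ℝ) : 𝕜) • bs.ind b1)
      ≤ C ^ p * Q bs g + 2 * C ^ p * δ' := by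
    have h1 := stepA hp bs hC0 hv hA hne (by rw [hb1c] : b1.card = A₀.card)
      (hbefA M k (le_refl M))
    have h2 : Q bs (g - bs.proj b1 g) ≤ Q bs g + δ' := by
      have := Q_sub_le hp bs g (bs.proj b1 g)
      linarith
    have h3 := mul_le_mul_of_nonneg_left h2 hk0
    nlinarith [hδ'.le, hκ]
  have bQA2 : Q bs ((g - bs.proj A₀ g) + ((bs.minCoef g A₀ : ℝ) : 𝕜) • bs.ind b2)
      ≤ C ^ p * Q bs g + 2 * C ^ p * δ' := by
    have h1 := stepA hp bs hC0 hv hA hne (by rw [hb2c] : b2.card = A₀.card)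
      (hbefA (M + k) k (by omega))
    have h2 : Q bs (g - bs.proj b2 g) ≤ Q bs g + δ' := by
      have := Q_sub_le hp bs g (bs.proj b2 g)
      linarith
    have h3 := mul_le_mul_of_nonneg_left h2 hk0
    nlinarith [hδ'.le, hκ]
  have bP12 : Q bs (((bs.minCoef g A₀ : ℝ) : 𝕜) • bs.ind b1
      - ((bs.minCoef g A₀ : ℝ) : 𝕜) • bs.ind b2)
      ≤ 2 * C ^ p * Q bs g + 4 * C ^ p * δ' := by
    have eid : ((bs.minCoef g A₀ : ℝ) : 𝕜) • bs.ind b1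
        - ((bs.minCoef g A₀ : ℝ) : 𝕜) • bs.ind b2
        = ((g - bs.proj A₀ g) + ((bs.minCoef g A₀ : ℝ) : 𝕜) • bs.ind b1)
          - ((g - bs.proj A₀ g) + ((bs.minCoef g A₀ : ℝ) : 𝕜) • bs.ind b2) := by abel
    rw [eid]
    have := Q_sub_le hp bs ((g - bs.proj A₀ g) + ((bs.minCoef g A₀ : ℝ) : 𝕜) • bs.ind b1)
      ((g - bs.proj A₀ g) + ((bs.minCoef g A₀ : ℝ) : 𝕜) • bs.ind b2)
    linarith
  have hd12 : Disjoint b1 b2 := blk_disjoint_of_le (by omega)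
  have hdS1 : Disjoint S b1 := by
    rw [Finset.disjoint_left]
    intro a ha hb
    have h1 := blk_lower hb
    have h2 := hSM a ha
    omega
  have hdS2 : Disjoint S b2 := by
    rw [Finset.disjoint_left]
    intro a ha hb
    have h1 := blk_lower hb
    have h2 := hSM a ha
    omega
  have hcardS : S.card = (b1 ∪ b2).card := by
    rw [Finset.card_union_of_disjoint hd12, hb1c, hb2c, hS]
    omega
  have hbefS : FinsetBefore S (b1 ∪ b2) := by
    intro a ha b hb
    have h2 := hSM a ha
    rcases Finset.mem_union.1 hb with h | h
    · have := blk_lower h; omega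
    · have := blk_lower h; omega
  have h1 := stepC hp bs hC0 hv (g := g) (A₀ := A₀) hb1ne hd12 hdS1 hdS2 hcardS
    (Or.inr hbefS)
  have h2 := mul_le_mul_of_nonneg_left bP12 hk0
  have hδ'mul : 4 * (C ^ p)^2 * δ' = δ := by
    rw [hδ'def]
    field_simp
  nlinarith [h1, h2, hδ'mul.le, hδ'mul.ge]

end QGfromV

end PBasisAux
namespace PBasisAux

open PBasis Finset

set_option linter.unusedSectionVars false
set_option maxHeartbeats 2000000

variable {𝕜 : Type*} [RCLike 𝕜] {X : Type*} [AddCommGroup X] [Module 𝕜 X] {p : ℝ}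

section AGfromV

variable (hp : 0 < p) (bs : PBasis 𝕜 X p) {C : ℝ}

lemma coord_res (f : X) (D : Finset ℕ) (n : ℕ) :
    bs.coord n (f - bs.proj D f) = if n ∈ D then 0 else bs.coord n f := by
  rw [map_sub, coord_proj]
  split_ifs <;> ring

lemma greedy_res {f : X} {A : Finset ℕ} (hA : bs.IsGreedySet f A) (D : Finset ℕ) :
    bs.IsGreedySet (f - bs.proj D f) (A \ D) := by
  intro n hn m hm
  rw [Finset.mem_sdiff] at hn
  rw [coord_res, coord_res, if_neg hn.2]
  split_ifs with h
  · simp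
  · have hmA : m ∉ A := fun hmem => hm (Finset.mem_sdiff.2 ⟨hmem, h⟩)
    exact hA n hn.1 m hmA

lemma residual_split (f : X) (A D : Finset ℕ) :
    f - bs.proj A f
      = ((f - bs.proj D f) - bs.proj (A \ D) (f - bs.proj D f)) + bs.proj (D \ A) f := by
  have h1 : bs.proj (A \ D) (f - bs.proj D f) = bs.proj (A \ D) f := by
    rw [proj_sub, proj_proj]
    have h : (A \ D) ∩ D = ∅ := by
      rw [← Finset.disjoint_iff_inter_eq_empty]
      exact Finset.sdiff_disjoint
    rw [h, proj_empty, sub_zero]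
  rw [h1]
  have h2 : bs.proj A f = bs.proj (A \ D) f + bs.proj (A ∩ D) f := by
    rw [← proj_union bs (Finset.disjoint_sdiff_inter A D), Finset.sdiff_union_inter]
  have h3 : bs.proj D f = bs.proj (D \ A) f + bs.proj (D ∩ A) f := by
    rw [← proj_union bs (Finset.disjoint_sdiff_inter D A), Finset.sdiff_union_inter]
  rw [h2, h3, Finset.inter_comm D A]
  abel

include hp

/-- **Direction (⇐) : the V-condition implies almost greediness.** -/
theorem ag_of_v (hC1 : 1 ≤ C) (hv : Vcond bs C) :
    ∃ C' : ℝ, 0 < C' ∧ bs.IsAlmostGreedyWith C' := by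
  classical
  have hC0 : (0:ℝ) ≤ C := by linarith
  have hκ : 1 ≤ C ^ p := by
    rw [← Real.one_rpow p]
    exact Real.rpow_le_rpow (by norm_num) hC1 hp.le
  have hk0 : (0:ℝ) ≤ C ^ p := by linarith
  have hbin0 : 0 ≤ binC p := binC_nonneg hp
  set KQ : ℝ := 9 * (C ^ p)^4 with hKQ
  have hKQ1 : 1 ≤ KQ := by nlinarith [one_le_pow₀ hκ (n := 4)]
  set KAG : ℝ := KQ + 4 * binC p * (C ^ p * (KQ * (2 * (C ^ p)^2))) with hKAG
  have hKQ0 : (0:ℝ) ≤ KQ := by linarith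
  have hterm0 : 0 ≤ 4 * binC p * (C ^ p * (KQ * (2 * (C ^ p)^2))) := by
    apply mul_nonneg (mul_nonneg (by norm_num) hbin0)
    apply mul_nonneg hk0
    apply mul_nonneg hKQ0
    positivity
  have hKAG1 : 1 ≤ KAG := by rw [hKAG]; linarith
  have hKAG0 : (0:ℝ) < KAG := by linarith
  refine ⟨KAG ^ (1/p), Real.rpow_pos_of_pos hKAG0 _, ?_⟩
  intro f A D hA hDA
  have hCp' : (KAG ^ (1/p)) ^ p = KAG := by
    rw [← Real.rpow_mul hKAG0.le, one_div, inv_mul_cancel₀ (ne_of_gt hp), Real.rpow_one]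
  rw [N_le_iff_Q_le hp bs (le_of_lt (Real.rpow_pos_of_pos hKAG0 _)), hCp']
  set g : X := f - bs.proj D f with hg
  set A₀ : Finset ℕ := A \ D with hA₀
  have hqgg0 : 0 ≤ Q bs g := Q_nonneg hp bs g
  have hgreedy : bs.IsGreedySet g A₀ := greedy_res bs hA D
  have hQr : Q bs (g - bs.proj A₀ g) ≤ KQ * Q bs g := qg_of_v hp bs hC1 hv g A₀ hgreedy
  have hsplit := residual_split bs f A D
  have htri : Q bs (f - bs.proj A f)
      ≤ Q bs (g - bs.proj A₀ g) + Q bs (bs.proj (D \ A) f) := by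
    rw [hsplit]
    exact Q_add_le hp bs _ _
  -- now bound `QP := Q (proj (D \ A) f)`
  have hQP : Q bs (bs.proj (D \ A) f)
      ≤ 4 * binC p * (C ^ p * (KQ * (2 * (C ^ p)^2 * Q bs g))) := by
    rcases (A₀ : Finset ℕ).eq_empty_or_nonempty with hA₀e | hA₀ne
    · -- then A ⊆ D and |D| ≤ |A| forces A = D, so D \ A = ∅
      have hsub : A ⊆ D := by
        intro a ha
        by_contra hnd
        exact Finset.notMem_empty a (hA₀e ▸ Finset.mem_sdiff.2 ⟨ha, hnd⟩)
      have : A = D := Finset.eq_of_subset_of_card_le hsub hDA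
      rw [← this, Finset.sdiff_self, proj_empty, Q_zero hp bs]
      have h4 : (0:ℝ) ≤ 2 * (C ^ p)^2 * Q bs g := by positivity
      positivity
    -- A is nonempty since it contains A₀
    have hAne : A.Nonempty := by
      obtain ⟨a, ha⟩ := hA₀ne
      exact ⟨a, (Finset.mem_sdiff.1 ha).1⟩
    set α := bs.minCoef f A with hα
    have hα0 : 0 ≤ α := minCoef_nonneg bs f A
    rcases eq_or_lt_of_le hα0 with hα0' | hαpos
    · -- α = 0 : all coordinates outside A vanish
      have hzero : ∀ m ∈ D \ A, bs.coord m f = 0 := by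
        intro m hm
        have hmA : m ∉ A := (Finset.mem_sdiff.1 hm).2
        have h := greedy_out_le bs hA hAne hmA
        rw [← hα] at h
        have : ‖bs.coord m f‖ ≤ 0 := by linarith [hα0'.le]
        exact norm_le_zero_iff.1 this
      rw [proj_eq_zero bs hzero, Q_zero hp bs]
      have h4 : (0:ℝ) ≤ 2 * (C ^ p)^2 * Q bs g := by positivity
      positivity
    -- main case: α > 0
    have hk1 : 1 ≤ A₀.card := Finset.card_pos.2 hA₀ne
    have hFc : (blk (D.sup id + 1) (2 * A₀.card)).card = 2 * A₀.card := blk_card _ _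
    set F := blk (D.sup id + 1) (2 * A₀.card) with hF
    have hm2k : Q bs (((bs.minCoef g A₀ : ℝ) : 𝕜) • bs.ind F)
        ≤ 2 * (C ^ p)^2 * Q bs g :=
      m2k_of_v hp bs hC1 hv g A₀ hgreedy hA₀ne F (by rw [hFc])
    have hαα' : α ≤ bs.minCoef g A₀ := by
      rw [hα]
      apply le_minCoef bs hA₀ne
      intro n hn
      rw [coord_res, if_neg (Finset.mem_sdiff.1 hn).2]
      exact minCoef_le bs (Finset.mem_sdiff.1 hn).1
    have hα'0 : 0 ≤ bs.minCoef g A₀ := minCoef_nonneg bs g A₀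
    have hEcard : (D \ A).card ≤ A₀.card := by
      have h1 := Finset.card_sdiff_add_card_inter D A
      have h2 := Finset.card_sdiff_add_card_inter A D
      rw [Finset.inter_comm A D] at h2
      rw [hA₀] at *
      omega
    have hRbound : ∀ G ⊆ D \ A, Q bs (∑ m ∈ G, ((α : ℝ) : 𝕜) • bs.e m)
        ≤ C ^ p * (KQ * (2 * (C ^ p)^2 * Q bs g)) := by
      intro G hGE
      have hGind : (∑ m ∈ G, ((α : ℝ) : 𝕜) • bs.e m) = ((α : ℝ) : 𝕜) • bs.ind G := by
        rw [PBasis.ind, Finset.smul_sum]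
      rw [hGind, Q_smul hp, norm_ofReal_nonneg hα0]
      have hGcard : G.card ≤ F.card := by
        rw [hFc]
        have h1 := Finset.card_le_card hGE
        omega
      obtain ⟨BG, hBGsub, hBGcard⟩ := Finset.exists_subset_card_eq hGcard
      have hsep : Q bs (bs.ind G) ≤ C ^ p * Q bs (bs.ind BG) := by
        apply sep_dem_v hp bs hC0 hv hBGcard
        intro a ha b hb
        have hbF := blk_lower (hBGsub hb)
        have haD : a ∈ D := (Finset.mem_sdiff.1 (hGE ha)).1
        have := lt_sup_succ haD
        omega
      have hsucc : Q bs (bs.ind BG) ≤ KQ * Q bs (bs.ind F) := by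
        rw [hKQ]
        exact succ_generic hp bs (fun g' A' hA' => qg_of_v hp bs hC1 hv g' A' hA') hBGsub
      have hαF : α ^ p * Q bs (bs.ind F) ≤ 2 * (C ^ p)^2 * Q bs g := by
        have h1 : α ^ p ≤ (bs.minCoef g A₀) ^ p := Real.rpow_le_rpow hα0 hαα' hp.le
        have h2 : α ^ p * Q bs (bs.ind F) ≤ (bs.minCoef g A₀) ^ p * Q bs (bs.ind F) :=
          mul_le_mul_of_nonneg_right h1 (Q_nonneg hp bs _)
        rw [Q_smul hp, norm_ofReal_nonneg hα'0] at hm2k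
        linarith
      have hc1 : α ^ p * Q bs (bs.ind G) ≤ α ^ p * (C ^ p * (KQ * Q bs (bs.ind F))) := by
        apply mul_le_mul_of_nonneg_left _ (Real.rpow_nonneg hα0 p)
        calc Q bs (bs.ind G) ≤ C ^ p * Q bs (bs.ind BG) := hsep
          _ ≤ C ^ p * (KQ * Q bs (bs.ind F)) := mul_le_mul_of_nonneg_left hsucc hk0
      calc α ^ p * Q bs (bs.ind G) ≤ α ^ p * (C ^ p * (KQ * Q bs (bs.ind F))) := hc1
        _ = C ^ p * (KQ * (α ^ p * Q bs (bs.ind F))) := by ring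
        _ ≤ C ^ p * (KQ * (2 * (C ^ p)^2 * Q bs g)) := by
            apply mul_le_mul_of_nonneg_left _ hk0
            exact mul_le_mul_of_nonneg_left hαF (by linarith [hKQ1])
    have hαne : ((α : ℝ) : 𝕜) ≠ 0 := by
      rw [ne_eq, RCLike.ofReal_eq_zero]
      exact ne_of_gt hαpos
    have hexp : bs.proj (D \ A) f
        = ∑ m ∈ D \ A, (bs.coord m f / ((α : ℝ) : 𝕜)) • (((α : ℝ) : 𝕜) • bs.e m) := by
      unfold PBasis.proj
      apply Finset.sum_congr rfl
      intro m _
      rw [smul_smul, div_mul_cancel₀ _ hαne]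
    have hcc : ∀ m ∈ D \ A, ‖bs.coord m f / ((α : ℝ) : 𝕜)‖ ≤ 1 := by
      intro m hm
      rw [norm_div, norm_ofReal_nonneg hα0, div_le_one hαpos]
      rw [hα]
      exact greedy_out_le bs hA hAne (Finset.mem_sdiff.1 hm).2
    have hbin := bin_kk hp bs (D \ A) (fun m => ((α : ℝ) : 𝕜) • bs.e m) _ hRbound
      (fun m => bs.coord m f / ((α : ℝ) : 𝕜)) hcc
    rw [← hexp] at hbin
    calc Q bs (bs.proj (D \ A) f)
        ≤ 4 * binC p * (C ^ p * (KQ * (2 * (C ^ p)^2 * Q bs g))) := hbin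
      _ = 4 * binC p * (C ^ p * (KQ * (2 * (C ^ p)^2 * Q bs g))) := rfl
  calc Q bs (f - bs.proj A f)
      ≤ Q bs (g - bs.proj A₀ g) + Q bs (bs.proj (D \ A) f) := htri
    _ ≤ KQ * Q bs g + 4 * binC p * (C ^ p * (KQ * (2 * (C ^ p)^2 * Q bs g))) := by
        linarith [hQr, hQP]
    _ = KAG * Q bs g := by rw [hKAG]; ring
end AGfromV

end PBasisAux
namespace PBasisAux

open PBasis Finset

set_option linter.unusedSectionVars false
set_option maxHeartbeats 2000000

variable {𝕜 : Type*} [RCLike 𝕜] {X : Type*} [AddCommGroup X] [Module 𝕜 X] {p : ℝ}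

section VfromAG

variable (hp : 0 < p) (bs : PBasis 𝕜 X p) {C : ℝ}

include hp

/-- `Q`-version of almost-greediness. -/
lemma agQ (hC : 0 ≤ C) (hag : bs.IsAlmostGreedyWith C) :
    ∀ (f : X) (A B : Finset ℕ), bs.IsGreedySet f A → B.card ≤ A.card →
      Q bs (f - bs.proj A f) ≤ C ^ p * Q bs (f - bs.proj B f) := by
  intro f A B hA hBA
  exact (N_le_iff_Q_le hp bs hC _ _).1 (hag f A B hA hBA)

/-- quasi-greediness from almost-greediness. -/
lemma agqg (hC : 0 ≤ C) (hag : bs.IsAlmostGreedyWith C) :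
    ∀ (f : X) (A : Finset ℕ), bs.IsGreedySet f A →
      Q bs (f - bs.proj A f) ≤ C ^ p * Q bs f := by
  intro f A hA
  have h := agQ hp bs hC hag f A ∅ hA (by simp)
  rwa [proj_empty, sub_zero] at h

/-- separated democracy from almost-greediness. -/
lemma agsep (hC : 0 ≤ C) (hag : bs.IsAlmostGreedyWith C) {G B : Finset ℕ}
    (hdisj : Disjoint G B) (hcard : B.card = G.card) :
    Q bs (bs.ind G) ≤ C ^ p * Q bs (bs.ind B) := by
  classical
  rcases G.eq_empty_or_nonempty with rfl | hGne
  · rw [ind_empty, Q_zero hp bs]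
    exact mul_nonneg (Real.rpow_nonneg hC p) (Q_nonneg hp bs _)
  set u : X := bs.ind (G ∪ B) with hu
  have hgreedy : bs.IsGreedySet u B := by
    intro n hn m _
    rw [hu, coord_ind, coord_ind, if_pos (Finset.mem_union_right _ hn), norm_one]
    split_ifs <;> simp
  have h := agQ hp bs hC hag u B G hgreedy (le_of_eq hcard.symm)
  have e1 : u - bs.proj B u = bs.ind G := by
    rw [hu, proj_ind]
    have hBint : B ∩ (G ∪ B) = B := by
      ext x; simp only [Finset.mem_inter, Finset.mem_union]; tauto
    rw [hBint, ind_union bs hdisj]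
    abel
  have e2 : u - bs.proj G u = bs.ind B := by
    rw [hu, proj_ind]
    have hGint : G ∩ (G ∪ B) = G := by
      ext x; simp only [Finset.mem_inter, Finset.mem_union]; tauto
    rw [hGint, ind_union bs hdisj]
    abel
  rwa [e1, e2] at h

/-- the truncation estimate from almost-greediness. -/
lemma agtrunc (hC : 0 ≤ C) (hag : bs.IsAlmostGreedyWith C)
    (g : X) (Λ F : Finset ℕ) (α : ℝ) (hα0 : 0 ≤ α)
    (hin : ∀ n ∈ Λ, α ≤ ‖bs.coord n g‖)
    (hout : ∀ m, m ∉ Λ → ‖bs.coord m g‖ ≤ α)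
    (hcard : F.card ≤ Λ.card) (hdisj : Disjoint F Λ) :
    Q bs (((α : ℝ) : 𝕜) • bs.ind F)
      ≤ 2 * C ^ p * Q bs g + (C ^ p + 1) * Q bs (bs.proj F g) := by
  classical
  set sα : 𝕜 := ((α : ℝ) : 𝕜) with hsα
  have hnsα : ‖sα‖ = α := norm_ofReal_nonneg hα0
  set u : X := (g - bs.proj F g) + sα • bs.ind F with hu
  have hcu : ∀ n, bs.coord n u = if n ∈ F then sα else bs.coord n g := by
    intro n
    rw [hu, map_add, map_sub, coord_proj, map_smul, coord_ind, smul_eq_mul]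
    split_ifs with h
    · ring
    · ring
  have hgreedyu : bs.IsGreedySet u Λ := by
    intro n hn m hm
    have hnF : n ∉ F := Finset.disjoint_right.1 hdisj hn
    rw [hcu, hcu, if_neg hnF]
    have h1 : α ≤ ‖bs.coord n g‖ := hin n hn
    split_ifs with h
    · rw [hnsα]; exact h1
    · exact le_trans (hout m hm) h1
  have hgreedyg : bs.IsGreedySet g Λ := by
    intro n hn m hm
    exact le_trans (hout m hm) (hin n hn)
  have key := agQ hp bs hC hag u Λ F hgreedyu hcard
  have hΛF : Λ ∩ F = ∅ := by
    rw [← Finset.disjoint_iff_inter_eq_empty]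
    exact hdisj.symm
  have hFF : F ∩ F = F := Finset.inter_self F
  have hFΛ : F ∩ Λ = ∅ := by rwa [← Finset.disjoint_iff_inter_eq_empty]
  have eprojΛ : bs.proj Λ u = bs.proj Λ g := by
    rw [hu, proj_add, proj_sub, proj_proj, proj_smul, proj_ind, hΛF, proj_empty,
      ind_empty]
    simp
  have eprojF : bs.proj F u = sα • bs.ind F := by
    rw [hu, proj_add, proj_sub, proj_proj, proj_smul, proj_ind, hFF]
    simp
  have e2 : u - bs.proj F u = g - bs.proj F g := by rw [eprojF, hu]; abel
  rw [e2, eprojΛ] at key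
  -- sα•ind F = (u - proj Λ g) - (g - proj Λ g) + proj F g
  have eid : sα • bs.ind F
      = (u - bs.proj Λ g) - (g - bs.proj Λ g) + bs.proj F g := by
    rw [hu]; abel
  have hq1 : Q bs (sα • bs.ind F)
      ≤ Q bs (u - bs.proj Λ g) + Q bs (g - bs.proj Λ g) + Q bs (bs.proj F g) := by
    rw [eid]
    have h1 := Q_add_le hp bs ((u - bs.proj Λ g) - (g - bs.proj Λ g)) (bs.proj F g)
    have h2 := Q_sub_le hp bs (u - bs.proj Λ g) (g - bs.proj Λ g)
    linarith
  have hq2 : Q bs (g - bs.proj F g) ≤ Q bs g + Q bs (bs.proj F g) :=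
    Q_sub_le hp bs g (bs.proj F g)
  have hq3 : Q bs (g - bs.proj Λ g) ≤ C ^ p * Q bs g := agqg hp bs hC hag g Λ hgreedyg
  have hq4 : C ^ p * Q bs (g - bs.proj F g) ≤ C ^ p * (Q bs g + Q bs (bs.proj F g)) :=
    mul_le_mul_of_nonneg_left hq2 (by positivity)
  nlinarith [key, hq1, hq3, hq4]

/-- a finite threshold set. -/
lemma threshold_set (g : X) {α : ℝ} (hα : 0 < α) :
    ∃ Λ : Finset ℕ, (∀ n, n ∈ Λ ↔ α ≤ ‖bs.coord n g‖) := by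
  classical
  obtain ⟨N₀, hN₀⟩ := coord_eventually_small bs g hα
  refine ⟨(Finset.range N₀).filter (fun n => α ≤ ‖bs.coord n g‖), fun n => ?_⟩
  rw [Finset.mem_filter, Finset.mem_range]
  constructor
  · exact fun h => h.2
  · intro h
    refine ⟨?_, h⟩
    by_contra hn
    push_neg at hn
    exact absurd h (not_le.2 (hN₀ n hn))

end VfromAG

end PBasisAux
namespace PBasisAux

open PBasis Finset

set_option linter.unusedSectionVars false
set_option maxHeartbeats 2000000

variable {𝕜 : Type*} [RCLike 𝕜] {X : Type*} [AddCommGroup X] [Module 𝕜 X] {p : ℝ}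

section VofAG

variable (hp : 0 < p) (bs : PBasis 𝕜 X p) {C : ℝ}

include hp

/-- **Direction (⇒) : almost greediness implies the V-condition.** -/
theorem v_of_ag (hp1 : p ≤ 1) (hC1 : 1 ≤ C) (hag : bs.IsAlmostGreedyWith C) :
    ∃ C' : ℝ, 0 < C' ∧ Vcond bs C' := by
  classical
  have hC0 : (0:ℝ) ≤ C := by linarith
  have hκ : 1 ≤ C ^ p := by
    rw [← Real.one_rpow p]
    exact Real.rpow_le_rpow (by norm_num) hC1 hp.le
  have hk0 : (0:ℝ) ≤ C ^ p := by linarith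
  have hbin0 : 0 ≤ binC p := binC_nonneg hp
  have hκ4 : 1 ≤ (C ^ p)^4 := one_le_pow₀ hκ
  have hκ3 : 1 ≤ (C ^ p)^3 := one_le_pow₀ hκ
  set KK : ℝ := C ^ p + 16 * binC p * (C ^ p)^4 with hKK
  set Kj : ℝ := 8 * binC p * ((C ^ p)^4 + (C ^ p)^3) with hKj
  have hKj0 : 0 ≤ Kj := by
    rw [hKj]
    apply mul_nonneg (by linarith)
    linarith
  have hKK1 : 1 ≤ KK := by
    rw [hKK]
    nlinarith [mul_nonneg hbin0 (le_trans zero_le_one hκ4)]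
  have hKK0 : (0:ℝ) < KK := by linarith
  refine ⟨KK ^ (1/p), Real.rpow_pos_of_pos hKK0 _, ?_⟩
  intro f A B hA hcard hbef
  have hCp' : (KK ^ (1/p)) ^ p = KK := by
    rw [← Real.rpow_mul hKK0.le, one_div, inv_mul_cancel₀ (ne_of_gt hp), Real.rpow_one]
  rw [N_le_iff_Q_le hp bs (le_of_lt (Real.rpow_pos_of_pos hKK0 _)), hCp']
  rcases A.eq_empty_or_nonempty with rfl | hAne
  · -- A = B = ∅
    have hB : B = ∅ := Finset.card_eq_zero.1 (by simpa using hcard)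
    subst hB
    rw [proj_empty, ind_empty, smul_zero, sub_zero]
    nlinarith [Q_nonneg hp bs f, hKK1]
  have hdisj : Disjoint A B := by
    rcases hbef with h | h
    · exact disjoint_of_finsetBefore h
    · exact (disjoint_of_finsetBefore h).symm
  have hα0 : 0 ≤ bs.minCoef f A := minCoef_nonneg bs f A
  rcases eq_or_lt_of_le hα0 with hα0' | hαpos
  · -- minCoef = 0
    rw [← hα0', RCLike.ofReal_zero, zero_smul, sub_zero]
    have h := agqg hp bs hC0 hag f A hA
    have : C ^ p * Q bs f ≤ KK * Q bs f := by
      apply mul_le_mul_of_nonneg_right _ (Q_nonneg hp bs f)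
      rw [hKK]
      nlinarith [mul_nonneg hbin0 (le_trans zero_le_one hκ4)]
    linarith
  -- main case
  set α := bs.minCoef f A with hα
  set sα : 𝕜 := ((α : ℝ) : 𝕜) with hsα
  set g : X := f - sα • bs.ind B with hg
  have hcoordg : ∀ n, bs.coord n g = if n ∈ B then bs.coord n f - sα else bs.coord n f := by
    intro n
    rw [hg, map_sub, map_smul, coord_ind, smul_eq_mul]
    split_ifs <;> ring
  have hqg0 : 0 ≤ Q bs g := Q_nonneg hp bs g
  -- the basic almost-greedy estimate against B
  have key0 : Q bs (f - bs.proj A f) ≤ C ^ p * Q bs (f - bs.proj B f) :=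
    agQ hp bs hC0 hag f A B hA (le_of_eq hcard)
  have eproj : f - bs.proj B f = g - bs.proj B g := by
    have h1 : bs.proj B g = bs.proj B f - sα • bs.ind B := by
      rw [hg, proj_sub, proj_smul, proj_ind, Finset.inter_self]
    rw [h1, hg]
    abel
  rw [eproj] at key0
  -- now the δ-limit bound for Q (g - proj B g)
  apply le_of_forall_pos_le_add'
  intro δ hδ
  set δ' := δ / (Kj + 1) with hδ'def
  have hδ' : 0 < δ' := div_pos hδ (by linarith)
  -- threshold set of g at level α
  obtain ⟨Λ, hΛiff⟩ := threshold_set hp bs g hαpos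
  have hΛin : ∀ n ∈ Λ, α ≤ ‖bs.coord n g‖ := fun n hn => (hΛiff n).1 hn
  have hΛout : ∀ m, m ∉ Λ → ‖bs.coord m g‖ ≤ α := by
    intro m hm
    by_contra h
    push_neg at h
    exact hm ((hΛiff m).2 h.le)
  have hgreedyΛ : bs.IsGreedySet g Λ := fun n hn m hm => le_trans (hΛout m hm) (hΛin n hn)
  have hAΛ : A ⊆ Λ := by
    intro n hn
    apply (hΛiff n).2
    rw [hcoordg, if_neg (Finset.disjoint_left.1 hdisj hn)]
    exact minCoef_le bs hn
  have hcardΛ : B.card ≤ Λ.card := by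
    rw [hcard]
    exact Finset.card_le_card hAΛ
  -- far block F₂
  obtain ⟨ε, hε, hεprop⟩ := exists_eps hp bs g hδ' B.card
  obtain ⟨N₂, hN₂⟩ := coord_eventually_small bs g hε
  set M₂ := max N₂ (max (Λ.sup id + 1) (B.sup id + 1)) with hM₂
  set F₂ := blk M₂ B.card with hF₂
  have hF₂c : F₂.card = B.card := blk_card _ _
  have hΛM : ∀ a ∈ Λ, a < M₂ := fun a ha =>
    lt_of_lt_of_le (lt_sup_succ ha) (le_trans (le_max_left _ _) (le_max_right _ _))
  have hBM : ∀ a ∈ B, a < M₂ := fun a ha =>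
    lt_of_lt_of_le (lt_sup_succ ha) (le_trans (le_max_right _ _) (le_max_right _ _))
  have hdisjF₂ : Disjoint F₂ Λ := by
    rw [Finset.disjoint_left]
    intro a ha hb
    have h1 := blk_lower ha
    have h2 := hΛM a hb
    omega
  have hsmallF₂ : ∀ n ∈ F₂, ‖bs.coord n g‖ ≤ ε := by
    intro n hn
    have h1 := blk_lower hn
    exact le_of_lt (hN₂ n (le_trans (le_max_left _ _) h1))
  have hjunkF₂ : Q bs (bs.proj F₂ g) ≤ δ' := hεprop F₂ (le_of_eq hF₂c) hsmallF₂
  have htr : Q bs (sα • bs.ind F₂) ≤ 2 * C ^ p * Q bs g + (C ^ p + 1) * δ' := by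
    have h := agtrunc hp bs hC0 hag g Λ F₂ α hα0 hΛin hΛout
      (hF₂c ▸ hcardΛ) hdisjF₂
    have h2 : (C ^ p + 1) * Q bs (bs.proj F₂ g) ≤ (C ^ p + 1) * δ' :=
      mul_le_mul_of_nonneg_left hjunkF₂ (by linarith)
    linarith
  -- subset-sum bound for BIN
  have h2α : (0:ℝ) < 2 * α := by linarith
  have hRbound : ∀ G ⊆ B, Q bs (∑ m ∈ G, ((2 * α : ℝ) : 𝕜) • bs.e m)
      ≤ 2 * ((C ^ p)^2 * (2 * C ^ p * Q bs g + (C ^ p + 1) * δ')) := by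
    intro G hGB
    have hGind : (∑ m ∈ G, ((2 * α : ℝ) : 𝕜) • bs.e m)
        = ((2 * α : ℝ) : 𝕜) • bs.ind G := by
      rw [PBasis.ind, Finset.smul_sum]
    rw [hGind, Q_smul hp, norm_ofReal_nonneg h2α.le]
    have h2αp : (2 * α) ^ p ≤ 2 * α ^ p := by
      rw [Real.mul_rpow (by norm_num) hα0]
      apply mul_le_mul_of_nonneg_right _ (Real.rpow_nonneg hα0 p)
      calc (2:ℝ) ^ p ≤ 2 ^ (1:ℝ) :=
            Real.rpow_le_rpow_of_exponent_le (by norm_num) hp1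
        _ = 2 := Real.rpow_one 2
    have hGcard : G.card ≤ F₂.card := by
      rw [hF₂c]
      exact Finset.card_le_card hGB
    obtain ⟨BG, hBGsub, hBGcard⟩ := Finset.exists_subset_card_eq hGcard
    have hdisjG : Disjoint G BG := by
      rw [Finset.disjoint_left]
      intro a ha hb
      have h1 := blk_lower (hBGsub hb)
      have h2 := hBM a (hGB ha)
      omega
    have hsep : Q bs (bs.ind G) ≤ C ^ p * Q bs (bs.ind BG) :=
      agsep hp bs hC0 hag hdisjG hBGcard
    have hsucc : Q bs (bs.ind BG) ≤ C ^ p * Q bs (bs.ind F₂) :=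
      succ_generic hp bs (fun g' A' hA' => agqg hp bs hC0 hag g' A' hA') hBGsub
    have hQF₂0 : 0 ≤ Q bs (bs.ind F₂) := Q_nonneg hp bs _
    have hQG0 : 0 ≤ Q bs (bs.ind G) := Q_nonneg hp bs _
    have hαF : α ^ p * Q bs (bs.ind F₂) ≤ 2 * C ^ p * Q bs g + (C ^ p + 1) * δ' := by
      rw [Q_smul hp, norm_ofReal_nonneg hα0] at htr
      exact htr
    calc (2 * α) ^ p * Q bs (bs.ind G)
        ≤ (2 * α ^ p) * Q bs (bs.ind G) := mul_le_mul_of_nonneg_right h2αp hQG0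
      _ ≤ (2 * α ^ p) * (C ^ p * (C ^ p * Q bs (bs.ind F₂))) := by
          apply mul_le_mul_of_nonneg_left _ (by positivity)
          calc Q bs (bs.ind G) ≤ C ^ p * Q bs (bs.ind BG) := hsep
            _ ≤ C ^ p * (C ^ p * Q bs (bs.ind F₂)) :=
                mul_le_mul_of_nonneg_left hsucc hk0
      _ = 2 * ((C ^ p)^2 * (α ^ p * Q bs (bs.ind F₂))) := by ring
      _ ≤ 2 * ((C ^ p)^2 * (2 * C ^ p * Q bs g + (C ^ p + 1) * δ')) := by
          apply mul_le_mul_of_nonneg_left _ (by norm_num)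
          exact mul_le_mul_of_nonneg_left hαF (by positivity)
  -- BIN application to proj B g
  have h2αne : ((2 * α : ℝ) : 𝕜) ≠ 0 := by
    rw [ne_eq, RCLike.ofReal_eq_zero]
    linarith
  have hexp : bs.proj B g
      = ∑ m ∈ B, (bs.coord m g / ((2 * α : ℝ) : 𝕜)) • (((2 * α : ℝ) : 𝕜) • bs.e m) := by
    unfold PBasis.proj
    apply Finset.sum_congr rfl
    intro m _
    rw [smul_smul, div_mul_cancel₀ _ h2αne]
  have hcc : ∀ m ∈ B, ‖bs.coord m g / ((2 * α : ℝ) : 𝕜)‖ ≤ 1 := by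
    intro m hm
    rw [norm_div, norm_ofReal_nonneg h2α.le, div_le_one h2α]
    rw [hcoordg, if_pos hm]
    calc ‖bs.coord m f - sα‖ ≤ ‖bs.coord m f‖ + ‖sα‖ := norm_sub_le _ _
      _ ≤ α + α := by
          have h1 : ‖bs.coord m f‖ ≤ α :=
            greedy_out_le bs hA hAne (Finset.disjoint_right.1 hdisj hm)
          have h2 : ‖sα‖ = α := norm_ofReal_nonneg hα0
          linarith
      _ = 2 * α := by ring
  have hbin := bin_kk hp bs B (fun m => ((2 * α : ℝ) : 𝕜) • bs.e m) _ hRbound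
    (fun m => bs.coord m g / ((2 * α : ℝ) : 𝕜)) hcc
  rw [← hexp] at hbin
  -- final assembly
  have htotal : Q bs (g - bs.proj B g) ≤ Q bs g + Q bs (bs.proj B g) :=
    Q_sub_le hp bs g (bs.proj B g)
  have hKjδ : Kj * δ' ≤ δ := by
    rw [hδ'def, ← mul_div_assoc, div_le_iff₀ (by linarith : (0:ℝ) < Kj + 1)]
    nlinarith [hδ.le]
  have hcomp : C ^ p * (Q bs g + 4 * binC p
      * (2 * ((C ^ p)^2 * (2 * C ^ p * Q bs g + (C ^ p + 1) * δ'))))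
      = KK * Q bs g + Kj * δ' := by
    rw [hKK, hKj]
    ring
  have hmono : Q bs (g - bs.proj B g) ≤ Q bs g + 4 * binC p
      * (2 * ((C ^ p)^2 * (2 * C ^ p * Q bs g + (C ^ p + 1) * δ'))) := by
    linarith [hbin]
  have hfin := mul_le_mul_of_nonneg_left hmono hk0
  rw [hcomp] at hfin
  linarith [key0]
end VofAG

end PBasisAux

/-- (Theorem 1.7, i) ⟺ v).) A basis of a `p`-Banach space is almost greedy
iff there is `C > 0` with `‖f − P_A(f)‖ ≤ C‖f − (min_{n∈A}|x_n^*(f)|)·𝟙_B‖` for all `f`,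
greedy sets `A`, and sets `B` with `|B| = |A|` and `A < B` or `B < A`. -/
theorem almost_greedy_iff_separated_polynomials {𝕜 : Type*} [RCLike 𝕜] {X : Type*}
    [AddCommGroup X] [Module 𝕜 X] {p : ℝ} (hp : 0 < p) (hp1 : p ≤ 1) (bs : PBasis 𝕜 X p) :
    (∃ C : ℝ, 0 < C ∧ bs.IsAlmostGreedyWith C) ↔
      (∃ C : ℝ, 0 < C ∧ ∀ (f : X) (A B : Finset ℕ),
        bs.IsGreedySet f A → B.card = A.card →
        (PBasis.FinsetBefore A B ∨ PBasis.FinsetBefore B A) →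
        bs.N (f - bs.proj A f) ≤
          C * bs.N (f - ((bs.minCoef f A : ℝ) : 𝕜) • bs.ind B)) := by
  constructor
  · rintro ⟨C, _, hag⟩
    have hag' : bs.IsAlmostGreedyWith (max C 1) := by
      intro f A B hA h
      exact le_trans (hag f A B hA h)
        (mul_le_mul_of_nonneg_right (le_max_left _ _) (bs.N_nonneg _))
    obtain ⟨C', hC'pos, hv⟩ := PBasisAux.v_of_ag hp bs hp1 (le_max_right _ _) hag'
    exact ⟨C', hC'pos, fun f A B h1 h2 h3 => hv f A B h1 h2 h3⟩
  · rintro ⟨C, _, hv⟩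
    have hv' : PBasisAux.Vcond bs (max C 1) := by
      intro f A B h1 h2 h3
      exact le_trans (hv f A B h1 h2 h3)
        (mul_le_mul_of_nonneg_right (le_max_left _ _) (bs.N_nonneg _))
    exact PBasisAux.ag_of_v hp bs (le_max_right _ _) hv'
end
end
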